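/- For every integer n ≥ 2, there exists a rooted non-binary universal tree-based network with n leaves having at most (n-2)^2 + n reticulation vertices; in particular, there exists a rooted non-binary universal tree-based network with n leaves with O(n^2) reticulations. -/

import Mathlib

/-- In-degree of vertex `v` with respect to the directed edge set `E`. -/
def indeg (E : Finset (ℕ × ℕ)) (v : ℕ) : ℕ := (E.filter (fun e => e.2 = v)).card

/-- Out-degree of vertex `v` with respect to the directed edge set `E`. -/
def outdeg (E : Finset (ℕ × ℕ)) (v : ℕ) : ℕ := (E.filter (fun e => e.1 = v)).card

/-- Directed reachability along the edge set `E`. -/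
def Reach (E : Finset (ℕ × ℕ)) (u v : ℕ) : Prop :=
  Relation.ReflTransGen (fun a b => (a, b) ∈ E) u v

/-- A rooted (non-binary) phylogenetic network on `X = {1, …, n}`:
a rooted directed acyclic graph with no parallel edges (edges form a set) in which
the root has indegree 0 and outdegree ≥ 2, every vertex of outdegree 0 (a leaf)
has indegree 1, the set of leaves is exactly `X = {1, …, n}`, and every other
vertex is a tree vertex (indegree 1, outdegree ≥ 2) or a reticulation
(indegree ≥ 2, outdegree 1).  For `n = 1` the network may consist of a single
vertex (covered by the first disjunct of `degree_cond`). -/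
structure RPN (n : ℕ) where
  V : Finset ℕ
  E : Finset (ℕ × ℕ)
  edge_mem : ∀ e ∈ E, e.1 ∈ V ∧ e.2 ∈ V
  no_loop : ∀ e ∈ E, e.1 ≠ e.2
  root : ℕ
  root_mem : root ∈ V
  reach_root : ∀ v ∈ V, Reach E root v
  acyclic : ∀ v, ¬ Relation.TransGen (fun a b => (a, b) ∈ E) v v
  /-- the vertices of outdegree 0 are exactly the leaves `1, …, n` -/
  leaves_eq : V.filter (fun v => outdeg E v = 0) = Finset.Icc 1 n
  /-- degree conditions (or a single-vertex network, allowed when `n = 1`) -/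
  degree_cond : (V = {root} ∧ E = ∅) ∨
    (indeg E root = 0 ∧ 2 ≤ outdeg E root ∧
      ∀ v ∈ V, v ≠ root →
        (outdeg E v = 0 ∧ indeg E v = 1) ∨
        (indeg E v = 1 ∧ 2 ≤ outdeg E v) ∨
        (2 ≤ indeg E v ∧ outdeg E v = 1))

/-- A rooted phylogenetic tree on `X` is a rooted phylogenetic network whose
underlying graph is a tree (for a graph all of whose vertices are reachable
from the root this is equivalent to `|E| + 1 = |V|`). -/
def RPN.IsTree {n : ℕ} (T : RPN n) : Prop := T.E.card + 1 = T.V.card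

/-- `E'` is (the edge set of) a support tree for `N`: a spanning tree of `N`
whose set of leaves equals `X = {1, …, n}`. -/
def IsSupportTree (n : ℕ) (N : RPN n) (E' : Finset (ℕ × ℕ)) : Prop :=
  E' ⊆ N.E ∧ E'.card + 1 = N.V.card ∧
  (∀ v ∈ N.V, Reach E' N.root v) ∧
  N.V.filter (fun v => outdeg E' v = 0) = Finset.Icc 1 n

/-- One step of suppressing a degree-2 vertex `v` (indegree 1 and outdegree 1)
in a rooted graph: remove `v` and replace the edges `(u,v)` and `(v,w)` by `(u,w)`. -/
def SuppressStep (G G' : Finset ℕ × Finset (ℕ × ℕ)) : Prop :=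
  ∃ u v w, v ∈ G.1 ∧ indeg G.2 v = 1 ∧ outdeg G.2 v = 1 ∧
    (u, v) ∈ G.2 ∧ (v, w) ∈ G.2 ∧ u ≠ w ∧
    G'.1 = G.1.erase v ∧ G'.2 = insert (u, w) ((G.2.erase (u, v)).erase (v, w))

/-- No suppressible (degree-2) vertices remain. -/
def NoDeg2 (G : Finset ℕ × Finset (ℕ × ℕ)) : Prop :=
  ∀ v ∈ G.1, ¬ (indeg G.2 v = 1 ∧ outdeg G.2 v = 1)

/-- Graph isomorphism fixing the leaf labels `1, …, n`. -/
def LeafIso (n : ℕ) (G H : Finset ℕ × Finset (ℕ × ℕ)) : Prop :=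
  ∃ φ : ℕ → ℕ, Set.InjOn φ ↑G.1 ∧ G.1.image φ = H.1 ∧
    G.2.image (fun e => (φ e.1, φ e.2)) = H.2 ∧
    ∀ x ∈ Finset.Icc 1 n, x ∈ G.1 → φ x = x

/-- `T` is a base tree for `N`: `T` is a rooted phylogenetic tree on `X` and
some support tree of `N` becomes `T` (up to an isomorphism fixing the leaf
labels) after suppressing all degree-2 vertices; equivalently, some support
tree of `N` is a subdivision of `T`. -/
def IsBaseTree (n : ℕ) (N T : RPN n) : Prop :=
  T.IsTree ∧ ∃ E', IsSupportTree n N E' ∧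
    ∃ G : Finset ℕ × Finset (ℕ × ℕ),
      Relation.ReflTransGen SuppressStep (N.V, E') G ∧
      NoDeg2 G ∧ LeafIso n G (T.V, T.E)

/-- `N` is tree-based if it has a support tree. -/
def TreeBased (n : ℕ) (N : RPN n) : Prop := ∃ E', IsSupportTree n N E'

/-- `N` is universal if every rooted phylogenetic tree on `X` is a base tree for `N`. -/
def UniversalRPN (n : ℕ) (N : RPN n) : Prop :=
  ∀ T : RPN n, T.IsTree → IsBaseTree n N T

/-- The number of reticulation vertices (vertices of indegree at least 2) of `N`. -/
def numReticulations (n : ℕ) (N : RPN n) : ℕ :=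
  (N.V.filter (fun v => 2 ≤ indeg N.E v)).card
section Helpers

lemma indeg_mono {E₁ E₂ : Finset (ℕ × ℕ)} (h : E₁ ⊆ E₂) (v : ℕ) :
    indeg E₁ v ≤ indeg E₂ v :=
  Finset.card_le_card (Finset.filter_subset_filter _ h)

lemma outdeg_mono {E₁ E₂ : Finset (ℕ × ℕ)} (h : E₁ ⊆ E₂) (v : ℕ) :
    outdeg E₁ v ≤ outdeg E₂ v :=
  Finset.card_le_card (Finset.filter_subset_filter _ h)

lemma outdeg_eq_zero {E : Finset (ℕ × ℕ)} {v : ℕ} (h : ∀ e ∈ E, e.1 ≠ v) :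
    outdeg E v = 0 := by
  unfold outdeg
  rw [Finset.card_eq_zero, Finset.filter_eq_empty_iff]
  exact h

lemma indeg_eq_zero {E : Finset (ℕ × ℕ)} {v : ℕ} (h : ∀ e ∈ E, e.2 ≠ v) :
    indeg E v = 0 := by
  unfold indeg
  rw [Finset.card_eq_zero, Finset.filter_eq_empty_iff]
  exact h

lemma outdeg_pos {E : Finset (ℕ × ℕ)} {u v : ℕ} (h : (u, v) ∈ E) :
    0 < outdeg E u := by
  exact Finset.card_pos.2 ⟨(u, v), Finset.mem_filter.2 ⟨h, rfl⟩⟩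

lemma indeg_pos {E : Finset (ℕ × ℕ)} {u v : ℕ} (h : (u, v) ∈ E) :
    0 < indeg E v := by
  exact Finset.card_pos.2 ⟨(u, v), Finset.mem_filter.2 ⟨h, rfl⟩⟩

lemma indeg_eq_one {E : Finset (ℕ × ℕ)} {u v : ℕ} (h : (u, v) ∈ E)
    (h2 : ∀ e ∈ E, e.2 = v → e = (u, v)) : indeg E v = 1 := by
  unfold indeg
  rw [Finset.card_eq_one]
  exact ⟨(u, v), by
    ext e; simp only [Finset.mem_filter, Finset.mem_singleton]
    constructor
    · rintro ⟨he, h2'⟩; exact h2 e he h2'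
    · rintro rfl; exact ⟨h, rfl⟩⟩

lemma outdeg_eq_one {E : Finset (ℕ × ℕ)} {u v : ℕ} (h : (u, v) ∈ E)
    (h2 : ∀ e ∈ E, e.1 = u → e = (u, v)) : outdeg E u = 1 := by
  unfold outdeg
  rw [Finset.card_eq_one]
  exact ⟨(u, v), by
    ext e; simp only [Finset.mem_filter, Finset.mem_singleton]
    constructor
    · rintro ⟨he, h2'⟩; exact h2 e he h2'
    · rintro rfl; exact ⟨h, rfl⟩⟩

lemma two_le_outdeg {E : Finset (ℕ × ℕ)} {u v w : ℕ} (h1 : (u, v) ∈ E)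
    (h2 : (u, w) ∈ E) (hvw : v ≠ w) : 2 ≤ outdeg E u := by
  apply Finset.one_lt_card.2
  exact ⟨(u, v), Finset.mem_filter.2 ⟨h1, rfl⟩, (u, w), Finset.mem_filter.2 ⟨h2, rfl⟩,
    by simp [hvw]⟩

lemma two_le_indeg {E : Finset (ℕ × ℕ)} {u v w : ℕ} (h1 : (u, w) ∈ E)
    (h2 : (v, w) ∈ E) (huv : u ≠ v) : 2 ≤ indeg E w := by
  apply Finset.one_lt_card.2
  exact ⟨(u, w), Finset.mem_filter.2 ⟨h1, rfl⟩, (v, w), Finset.mem_filter.2 ⟨h2, rfl⟩,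
    by simp [huv]⟩

lemma sum_indeg {V : Finset ℕ} {E : Finset (ℕ × ℕ)} (h : ∀ e ∈ E, e.2 ∈ V) :
    ∑ v ∈ V, indeg E v = E.card :=
  (Finset.card_eq_sum_card_fiberwise h).symm

lemma sum_outdeg {V : Finset ℕ} {E : Finset (ℕ × ℕ)} (h : ∀ e ∈ E, e.1 ∈ V) :
    ∑ v ∈ V, outdeg E v = E.card :=
  (Finset.card_eq_sum_card_fiberwise h).symm

lemma all_eq_one_of_sum {s : Finset ℕ} {f : ℕ → ℕ} (h1 : ∀ v ∈ s, 1 ≤ f v)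
    (h2 : ∑ v ∈ s, f v = s.card) : ∀ v ∈ s, f v = 1 := by
  by_contra hc
  push_neg at hc
  obtain ⟨v, hv, hne⟩ := hc
  have h2' : 2 ≤ f v := by
    have := h1 v hv
    omega
  have : s.card = ∑ v ∈ s, 1 := by simp
  have hlt : ∑ v ∈ s, 1 < ∑ v ∈ s, f v := by
    apply Finset.sum_lt_sum h1 ⟨v, hv, by omega⟩
  omega

/-- Acyclicity from a grading function. -/
lemma acyc_of_grade {E : Finset (ℕ × ℕ)} {gr : ℕ → ℕ}
    (h : ∀ e ∈ E, gr e.1 < gr e.2) :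
    ∀ v, ¬ Relation.TransGen (fun a b => (a, b) ∈ E) v v := by
  have key : ∀ a b, Relation.TransGen (fun a b => (a, b) ∈ E) a b → gr a < gr b := by
    intro a b hab
    induction hab with
    | single h' => exact h _ h'
    | tail _ h' ih => exact lt_trans ih (h _ h')
  intro v hv
  exact absurd (key v v hv) (lt_irrefl _)

/-- Reachability from the root, given a grading and in-edges for non-roots. -/
lemma reach_of_grade {V : Finset ℕ} {E : Finset (ℕ × ℕ)} {gr : ℕ → ℕ} {root : ℕ}
    (hg : ∀ e ∈ E, gr e.1 < gr e.2)
    (hin : ∀ v ∈ V, v ≠ root → ∃ u ∈ V, (u, v) ∈ E) :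
    ∀ v ∈ V, Reach E root v := by
  suffices H : ∀ m v, gr v = m → v ∈ V → Reach E root v by
    intro v hv; exact H (gr v) v rfl hv
  intro m
  induction m using Nat.strong_induction_on with
  | _ m ih =>
    intro v hm hv
    by_cases hroot : v = root
    · subst hroot; exact Relation.ReflTransGen.refl
    · obtain ⟨u, hu, hedge⟩ := hin v hv hroot
      have := hg _ hedge
      exact Relation.ReflTransGen.tail (ih (gr u) (by simp at this ⊢; omega) u rfl hu) hedge

end Helpers
section Paths

/-- The edge set of a path from `a` to `b` through the list `l` of intermediate
vertices. -/
def pathE : ℕ → List ℕ → ℕ → Finset (ℕ × ℕ)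
  | a, [], b => {(a, b)}
  | a, x :: l, b => insert (a, x) (pathE x l b)

lemma pathE_fst {a b : ℕ} {l : List ℕ} {e : ℕ × ℕ} (h : e ∈ pathE a l b) :
    e.1 = a ∨ e.1 ∈ l := by
  induction l generalizing a with
  | nil => simp [pathE] at h; subst h; left; rfl
  | cons x l ih =>
    simp only [pathE, Finset.mem_insert] at h
    rcases h with rfl | h
    · left; rfl
    · rcases ih h with h | h
      · right; simp [h]
      · right; simp [h]

lemma pathE_snd {a b : ℕ} {l : List ℕ} {e : ℕ × ℕ} (h : e ∈ pathE a l b) :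
    e.2 ∈ l ∨ e.2 = b := by
  induction l generalizing a with
  | nil => simp [pathE] at h; subst h; right; rfl
  | cons x l ih =>
    simp only [pathE, Finset.mem_insert] at h
    rcases h with rfl | h
    · left; simp
    · rcases ih h with h | h
      · left; simp [h]
      · right; exact h

lemma head_mem_pathE (a b : ℕ) (l : List ℕ) : (a, l.headD b) ∈ pathE a l b := by
  cases l with
  | nil => simp [pathE]
  | cons x l => simp [pathE]

lemma pathE_src_unique {a b : ℕ} {l : List ℕ} {e : ℕ × ℕ} (h : e ∈ pathE a l b)
    (h1 : e.1 = a) (h2 : a ∉ l) : e = (a, l.headD b) := by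
  cases l with
  | nil => simp [pathE] at h; simp [h]
  | cons x l =>
    simp only [pathE, Finset.mem_insert] at h
    rcases h with rfl | h
    · simp
    · exfalso
      rcases pathE_fst h with h' | h'
      · rw [h1] at h'; simp [← h'] at h2
      · rw [h1] at h'; simp [h'] at h2

lemma pathE_not_mem_src {a b x : ℕ} {l : List ℕ} (hx : x ∉ l) (hxa : x ≠ a)
    {w : ℕ} : (x, w) ∉ pathE a l b := by
  intro h
  rcases pathE_fst h with h' | h' <;> simp_all

lemma pathE_not_mem_tgt {a b x : ℕ} {l : List ℕ} (hx : x ∉ l) (hxb : x ≠ b)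
    {w : ℕ} : (w, x) ∉ pathE a l b := by
  intro h
  rcases pathE_snd h with h' | h' <;> simp_all

lemma pathE_step {a b x : ℕ} {l : List ℕ} (hx : x ∉ l) (hxa : x ≠ a) :
    pathE a l b = insert (a, l.headD b) ((pathE x l b).erase (x, l.headD b)) := by
  cases l with
  | nil =>
    simp [pathE]
  | cons y l =>
    simp only [pathE, List.headD_cons]
    congr 1
    rw [Finset.erase_insert]
    apply pathE_not_mem_src
    · simp at hx; tauto
    · simp at hx; tauto

/-- Contracting a subdivided path by successive suppression steps. -/
lemma path_contract (E₁ : Finset (ℕ × ℕ)) :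
    ∀ (l : List ℕ) (V : Finset ℕ) (a b : ℕ), l.Nodup →
    (∀ x ∈ l, x ∈ V) →
    (∀ x ∈ l, x ≠ a ∧ x ≠ b ∧ ∀ e ∈ E₁, e.1 ≠ x ∧ e.2 ≠ x) →
    a ≠ b →
    Relation.ReflTransGen SuppressStep (V, E₁ ∪ pathE a l b)
      (V \ l.toFinset, E₁ ∪ {(a, b)}) := by
  intro l
  induction l with
  | nil =>
    intro V a b _ _ _ _
    simp only [pathE, List.toFinset_nil, Finset.sdiff_empty]
    exact Relation.ReflTransGen.refl
  | cons x l ih =>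
    intro V a b hnd hmem hfresh hab
    have hxl : x ∉ l := by simp at hnd; tauto
    have hndl : l.Nodup := by simp at hnd; tauto
    have hxV : x ∈ V := hmem x (by simp)
    have hxa : x ≠ a := (hfresh x (by simp)).1
    have hxb : x ≠ b := (hfresh x (by simp)).2.1
    have hxE₁ : ∀ e ∈ E₁, e.1 ≠ x ∧ e.2 ≠ x := (hfresh x (by simp)).2.2
    set w := l.headD b with hw
    have hwcases : w ∈ l ∨ w = b := by
      cases l with
      | nil => right; rfl
      | cons y l' => left; simp [hw]
    have haw : a ≠ w := by
      rcases hwcases with h | h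
      · intro he; exact ((hfresh w (by simp [h])).1 he.symm).elim
      · rw [h]; exact hab
    have hxw : x ≠ w := by
      rcases hwcases with h | h
      · intro he; rw [he] at hxl; exact hxl h
      · rw [h]; exact hxb
    have hax_notE₁ : (a, x) ∉ E₁ := fun h => (hxE₁ _ h).2 rfl
    have hax_notP : (a, x) ∉ pathE x l b := pathE_not_mem_tgt hxl hxb
    have hstep : SuppressStep (V, E₁ ∪ pathE a (x :: l) b)
        ((V.erase x), E₁ ∪ pathE a l b) := by
      refine ⟨a, x, w, hxV, ?_, ?_, ?_, ?_, haw, rfl, ?_⟩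
      · -- indeg x = 1
        apply indeg_eq_one (u := a)
        · simp only [pathE]
          exact Finset.mem_union_right _ (Finset.mem_insert_self _ _)
        · rintro ⟨c, d⟩ he rfl
          simp only [Finset.mem_union, pathE, Finset.mem_insert] at he
          rcases he with he | he | he
          · exact absurd rfl (hxE₁ _ he).2
          · exact he
          · exact absurd he (pathE_not_mem_tgt hxl hxb)
      · -- outdeg x = 1
        apply outdeg_eq_one (v := w)
        · simp only [pathE]
          exact Finset.mem_union_right _ (Finset.mem_insert_of_mem (head_mem_pathE x b l))
        · rintro ⟨c, d⟩ he rfl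
          simp only [Finset.mem_union, pathE, Finset.mem_insert] at he
          rcases he with he | he | he
          · exact absurd rfl (hxE₁ _ he).1
          · exact absurd (congrArg Prod.fst he) hxa
          · exact pathE_src_unique he rfl hxl
      · simp only [pathE]
        exact Finset.mem_union_right _ (Finset.mem_insert_self _ _)
      · simp only [pathE]
        exact Finset.mem_union_right _ (Finset.mem_insert_of_mem (head_mem_pathE x b l))
      · -- edge set equality
        show E₁ ∪ pathE a l b =
          insert (a, w) (((E₁ ∪ pathE a (x :: l) b).erase (a, x)).erase (x, w))
        have e1 : (E₁ ∪ pathE a (x :: l) b).erase (a, x) = E₁ ∪ pathE x l b := by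
          simp only [pathE]
          rw [Finset.erase_union_distrib, Finset.erase_eq_of_notMem hax_notE₁,
            Finset.erase_insert hax_notP]
        rw [e1]
        have e2 : (E₁ ∪ pathE x l b).erase (x, w) =
            E₁ ∪ (pathE x l b).erase (x, w) := by
          rw [Finset.erase_union_distrib,
            Finset.erase_eq_of_notMem (fun h => (hxE₁ _ h).1 rfl)]
        rw [e2, ← Finset.union_insert]
        congr 1
        rw [hw]
        exact pathE_step hxl hxa
    refine Relation.ReflTransGen.head hstep ?_
    have hVeq : V \ (x :: l).toFinset = (V.erase x) \ l.toFinset := by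
      ext v
      simp only [Finset.mem_sdiff, List.toFinset_cons, Finset.mem_insert,
        Finset.mem_erase]
      tauto
    rw [hVeq]
    apply ih
    · exact hndl
    · intro y hy
      refine Finset.mem_erase.2 ⟨?_, hmem y (by simp [hy])⟩
      intro he; subst he; exact hxl hy
    · intro y hy
      exact hfresh y (by simp [hy])
    · exact hab
end Paths
section Multi

/-- Union of the edge sets of a list of subdivided paths. -/
def pathsE (L : List (ℕ × List ℕ × ℕ)) : Finset (ℕ × ℕ) :=
  L.foldr (fun t acc => pathE t.1 t.2.1 t.2.2 ∪ acc) ∅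

/-- All the intermediate vertices. -/
def midsL (L : List (ℕ × List ℕ × ℕ)) : List ℕ :=
  L.foldr (fun t acc => t.2.1 ++ acc) []

/-- The contracted edges. -/
def finE (L : List (ℕ × List ℕ × ℕ)) : Finset (ℕ × ℕ) :=
  L.foldr (fun t acc => insert (t.1, t.2.2) acc) ∅

lemma mem_pathsE {L : List (ℕ × List ℕ × ℕ)} {e : ℕ × ℕ} :
    e ∈ pathsE L → ∃ t ∈ L, e ∈ pathE t.1 t.2.1 t.2.2 := by
  induction L with
  | nil => simp [pathsE]
  | cons t L ih =>
    intro h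
    simp only [pathsE, List.foldr_cons, Finset.mem_union] at h
    rcases h with h | h
    · exact ⟨t, by simp, h⟩
    · obtain ⟨t', ht', he⟩ := ih h
      exact ⟨t', by simp [ht'], he⟩

lemma mem_midsL {L : List (ℕ × List ℕ × ℕ)} {x : ℕ} :
    x ∈ midsL L ↔ ∃ t ∈ L, x ∈ t.2.1 := by
  induction L with
  | nil => simp [midsL]
  | cons t L ih =>
    simp only [midsL, List.foldr_cons, List.mem_append] at *
    constructor
    · rintro (h | h)
      · exact ⟨t, by simp, h⟩
      · obtain ⟨t', ht', hx⟩ := ih.1 h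
        exact ⟨t', by simp [ht'], hx⟩
    · rintro ⟨t', ht', hx⟩
      rcases List.mem_cons.1 ht' with rfl | ht'
      · exact Or.inl hx
      · exact Or.inr (ih.2 ⟨t', ht', hx⟩)

lemma mem_finE {L : List (ℕ × List ℕ × ℕ)} {e : ℕ × ℕ} :
    e ∈ finE L ↔ ∃ t ∈ L, e = (t.1, t.2.2) := by
  induction L with
  | nil => simp [finE]
  | cons t L ih =>
    simp only [finE, List.foldr_cons, Finset.mem_insert] at *
    constructor
    · rintro (h | h)
      · exact ⟨t, by simp, h⟩
      · obtain ⟨t', ht', he⟩ := ih.1 h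
        exact ⟨t', by simp [ht'], he⟩
    · rintro ⟨t', ht', he⟩
      rcases List.mem_cons.1 ht' with rfl | ht'
      · exact Or.inl he
      · exact Or.inr (ih.2 ⟨t', ht', he⟩)

/-- Contracting a disjoint union of subdivided paths. -/
lemma multi_contract :
    ∀ (L : List (ℕ × List ℕ × ℕ)) (V : Finset ℕ) (F : Finset (ℕ × ℕ)),
    (midsL L).Nodup →
    (∀ x ∈ midsL L, x ∈ V) →
    (∀ x ∈ midsL L, (∀ e ∈ F, e.1 ≠ x ∧ e.2 ≠ x) ∧ ∀ t ∈ L, t.1 ≠ x ∧ t.2.2 ≠ x) →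
    (∀ t ∈ L, t.1 ≠ t.2.2) →
    Relation.ReflTransGen SuppressStep (V, F ∪ pathsE L)
      (V \ (midsL L).toFinset, F ∪ finE L) := by
  intro L
  induction L with
  | nil =>
    intro V F _ _ _ _
    simp only [pathsE, midsL, finE, List.foldr_nil, List.toFinset_nil,
      Finset.sdiff_empty, Finset.union_empty]
    exact Relation.ReflTransGen.refl
  | cons t L ih =>
    intro V F hnd hmem hfresh hne
    obtain ⟨a, m, b⟩ := t
    have hmids_cons : midsL ((a, m, b) :: L) = m ++ midsL L := by
      simp [midsL]
    rw [hmids_cons] at hnd hmem hfresh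
    have hndm : m.Nodup := (List.nodup_append.1 hnd).1
    have hndL : (midsL L).Nodup := by
      have := (List.nodup_append.1 hnd); tauto
    have hdisj : ∀ x ∈ m, x ∉ midsL L := by
      have h := (List.nodup_append.1 hnd).2.2
      intro x hx hx'
      exact h x hx x hx' rfl
    -- step 1: contract the first path, with E₁ = F ∪ pathsE L
    have h1 : Relation.ReflTransGen SuppressStep (V, (F ∪ pathsE L) ∪ pathE a m b)
        (V \ m.toFinset, (F ∪ pathsE L) ∪ {(a, b)}) := by
      apply path_contract
      · exact hndm
      · intro x hx; exact hmem x (by simp [hx])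
      · intro x hx
        have hf := hfresh x (by simp [hx])
        refine ⟨((hf.2 (a, m, b) (by simp)).1).symm, ((hf.2 (a, m, b) (by simp)).2).symm, ?_⟩
        intro e he
        rcases Finset.mem_union.1 he with he | he
        · exact (hf.1 e he)
        · obtain ⟨t', ht', he'⟩ := mem_pathsE he
          constructor
          · intro h
            rcases pathE_fst he' with h' | h'
            · rw [h] at h'; exact (hf.2 t' (by simp [ht'])).1 h'.symm
            · rw [h] at h'
              exact hdisj x hx (mem_midsL.2 ⟨t', ht', h'⟩)
          · intro h
            rcases pathE_snd he' with h' | h'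
            · rw [h] at h'
              exact hdisj x hx (mem_midsL.2 ⟨t', ht', h'⟩)
            · rw [h] at h'; exact (hf.2 t' (by simp [ht'])).2 h'.symm
      · exact hne (a, m, b) (by simp)
    -- step 2: contract the rest, with F' = F ∪ {(a,b)}
    have h2 : Relation.ReflTransGen SuppressStep
        ((V \ m.toFinset), (F ∪ {(a, b)}) ∪ pathsE L)
        ((V \ m.toFinset) \ (midsL L).toFinset, (F ∪ {(a, b)}) ∪ finE L) := by
      apply ih
      · exact hndL
      · intro x hx
        refine Finset.mem_sdiff.2 ⟨hmem x (by simp [hx]), ?_⟩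
        intro hx'
        exact hdisj x (by simpa using hx') hx
      · intro x hx
        have hf := hfresh x (by simp [hx])
        refine ⟨?_, fun t' ht' => hf.2 t' (by simp [ht'])⟩
        intro e he
        rcases Finset.mem_union.1 he with he | he
        · exact hf.1 e he
        · rw [Finset.mem_singleton.1 he]
          exact ⟨(hf.2 (a, m, b) (by simp)).1, (hf.2 (a, m, b) (by simp)).2⟩
      · intro t' ht'; exact hne t' (by simp [ht'])
    -- combine
    have e1 : F ∪ pathsE ((a, m, b) :: L) = (F ∪ pathsE L) ∪ pathE a m b := by
      simp only [pathsE, List.foldr_cons]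
      rw [Finset.union_comm (pathE a m b), Finset.union_assoc]
    have e2 : (F ∪ pathsE L) ∪ {(a, b)} = (F ∪ {(a, b)}) ∪ pathsE L := by
      rw [Finset.union_assoc, Finset.union_comm (pathsE L), ← Finset.union_assoc]
    have e3 : V \ (midsL ((a, m, b) :: L)).toFinset =
        (V \ m.toFinset) \ (midsL L).toFinset := by
      rw [hmids_cons]
      ext v
      simp only [Finset.mem_sdiff, List.toFinset_append, Finset.mem_union]
      tauto
    have e4 : F ∪ finE ((a, m, b) :: L) = (F ∪ {(a, b)}) ∪ finE L := by
      simp only [finE, List.foldr_cons]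
      rw [Finset.union_assoc, Finset.union_comm]
      ext e
      simp only [Finset.mem_union, Finset.mem_insert, Finset.mem_singleton]
      tauto
    rw [e1, e3, e4]
    exact Relation.ReflTransGen.trans h1 (e2 ▸ h2)

end Multi
section TreeStructure

open scoped Classical

variable {n : ℕ}

lemma transGen_last {R : ℕ → ℕ → Prop} {u v : ℕ}
    (h : Relation.TransGen R u v) : ∃ c, R c v := by
  induction h with
  | single h => exact ⟨u, h⟩
  | tail _ h _ => exact ⟨_, h⟩

lemma reach_transGen {E : Finset (ℕ × ℕ)} {u v : ℕ} (h : Reach E u v) (hne : u ≠ v) :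
    Relation.TransGen (fun a b => (a, b) ∈ E) u v := by
  rcases (Relation.ReflTransGen.cases_head h) with rfl | ⟨c, hc, hcv⟩
  · exact absurd rfl hne
  · exact Relation.TransGen.head' hc hcv

lemma T_nontriv (T : RPN n) (hn : 2 ≤ n) : ¬(T.V = {T.root} ∧ T.E = ∅) := by
  rintro ⟨hV, -⟩
  have := T.leaves_eq
  rw [hV] at this
  have hcard : ({T.root} : Finset ℕ).filter (fun v => outdeg T.E v = 0) ⊆ {T.root} :=
    Finset.filter_subset _ _
  have h1 : (Finset.Icc 1 n).card = n := Nat.card_Icc 1 n ▸ by omega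
  have h2 := Finset.card_le_card (this ▸ hcard)
  simp [h1] at h2
  omega

lemma T_deg (T : RPN n) (hn : 2 ≤ n) :
    indeg T.E T.root = 0 ∧ 2 ≤ outdeg T.E T.root ∧
      ∀ v ∈ T.V, v ≠ T.root →
        (outdeg T.E v = 0 ∧ indeg T.E v = 1) ∨
        (indeg T.E v = 1 ∧ 2 ≤ outdeg T.E v) ∨
        (2 ≤ indeg T.E v ∧ outdeg T.E v = 1) :=
  T.degree_cond.resolve_left (T_nontriv T hn)

lemma leaf_mem {T : RPN n} {x : ℕ} (hx : x ∈ Finset.Icc 1 n) :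
    x ∈ T.V ∧ outdeg T.E x = 0 := by
  have := T.leaves_eq
  rw [← this] at hx
  exact ⟨Finset.mem_of_mem_filter _ hx, (Finset.mem_filter.1 hx).2⟩

lemma leaf_iff {T : RPN n} {v : ℕ} (hv : v ∈ T.V) :
    outdeg T.E v = 0 ↔ v ∈ Finset.Icc 1 n := by
  constructor
  · intro h
    rw [← T.leaves_eq]
    exact Finset.mem_filter.2 ⟨hv, h⟩
  · intro h; exact (leaf_mem h).2

lemma root_not_leaf (T : RPN n) (hn : 2 ≤ n) : T.root ∉ Finset.Icc 1 n := by
  intro h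
  have h0 := (leaf_mem (T := T) h).2
  have h2 := (T_deg T hn).2.1
  omega

lemma exists_in_edge {T : RPN n} {v : ℕ} (hv : v ∈ T.V) (hne : v ≠ T.root) :
    ∃ u, (u, v) ∈ T.E := by
  have h := T.reach_root v hv
  obtain ⟨c, hc⟩ := transGen_last (reach_transGen h (Ne.symm hne))
  exact ⟨c, hc⟩

lemma indeg_one (T : RPN n) (hT : T.IsTree) (hn : 2 ≤ n) :
    ∀ v ∈ T.V, v ≠ T.root → indeg T.E v = 1 := by
  have hroot0 : indeg T.E T.root = 0 := (T_deg T hn).1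
  have hsum : ∑ v ∈ T.V, indeg T.E v = T.E.card :=
    sum_indeg (fun e he => (T.edge_mem e he).2)
  have hsum' : ∑ v ∈ T.V.erase T.root, indeg T.E v = T.E.card := by
    rw [← hsum, Finset.sum_erase _ hroot0]
  have hcard : (T.V.erase T.root).card = T.E.card := by
    rw [Finset.card_erase_of_mem T.root_mem]
    unfold RPN.IsTree at hT
    omega
  have h1 : ∀ v ∈ T.V.erase T.root, 1 ≤ indeg T.E v := by
    intro v hv
    obtain ⟨u, hu⟩ := exists_in_edge (Finset.mem_of_mem_erase hv)
      (Finset.ne_of_mem_erase hv)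
    exact indeg_pos hu
  intro v hv hne
  exact all_eq_one_of_sum h1 (hcard ▸ hsum') v (Finset.mem_erase.2 ⟨hne, hv⟩)

/-- The set of internal vertices of a tree. -/
def intl (T : RPN n) : Finset ℕ := T.V \ Finset.Icc 1 n

lemma root_mem_intl (T : RPN n) (hn : 2 ≤ n) : T.root ∈ intl T :=
  Finset.mem_sdiff.2 ⟨T.root_mem, root_not_leaf T hn⟩

lemma intl_out (T : RPN n) (hT : T.IsTree) (hn : 2 ≤ n) :
    ∀ v ∈ intl T, 2 ≤ outdeg T.E v := by
  intro v hv
  obtain ⟨hvV, hvnl⟩ := Finset.mem_sdiff.1 hv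
  by_cases hroot : v = T.root
  · rw [hroot]; exact (T_deg T hn).2.1
  · rcases (T_deg T hn).2.2 v hvV hroot with ⟨h1, _⟩ | ⟨_, h2⟩ | ⟨h3, _⟩
    · exact absurd ((leaf_iff hvV).1 h1) hvnl
    · exact h2
    · have := indeg_one T hT hn v hvV hroot
      omega

lemma V_eq_union (T : RPN n) : T.V = Finset.Icc 1 n ∪ intl T := by
  unfold intl
  rw [Finset.union_sdiff_of_subset]
  intro x hx
  exact (leaf_mem hx).1

lemma card_intl (T : RPN n) : (intl T).card + n = T.V.card := by
  unfold intl
  have hsub : Finset.Icc 1 n ⊆ T.V := fun x hx => (leaf_mem hx).1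
  have := Finset.card_sdiff_add_card_eq_card hsub
  have hIcc : (Finset.Icc 1 n).card = n := by rw [Nat.card_Icc]; omega
  omega

lemma intl_card_le (T : RPN n) (hT : T.IsTree) (hn : 2 ≤ n) :
    (intl T).card ≤ n - 1 := by
  have hsum : ∑ v ∈ T.V, outdeg T.E v = T.E.card :=
    sum_outdeg (fun e he => (T.edge_mem e he).1)
  have hsplit : T.V = Finset.Icc 1 n ∪ intl T := V_eq_union T
  have hdisj : Disjoint (Finset.Icc 1 n) (intl T) := by
    unfold intl
    exact Finset.disjoint_sdiff
  rw [hsplit, Finset.sum_union hdisj] at hsum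
  have h0 : ∑ v ∈ Finset.Icc 1 n, outdeg T.E v = 0 := by
    apply Finset.sum_eq_zero
    intro x hx; exact (leaf_mem hx).2
  have h2 : 2 * (intl T).card ≤ ∑ v ∈ intl T, outdeg T.E v := by
    rw [two_mul]
    calc (intl T).card + (intl T).card = ∑ _v ∈ intl T, 1 + ∑ _v ∈ intl T, 1 := by simp
    _ ≤ _ := by
        rw [← Finset.sum_add_distrib]
        apply Finset.sum_le_sum
        intro v hv
        have := intl_out T hT hn v hv
        omega
  have hcard := card_intl T
  unfold RPN.IsTree at hT
  have hIcc : (Finset.Icc 1 n).card = n := by rw [Nat.card_Icc]; omega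
  omega

lemma edge_src_intl {T : RPN n} {a b : ℕ} (h : (a, b) ∈ T.E) : a ∈ intl T := by
  have haV := (T.edge_mem _ h).1
  refine Finset.mem_sdiff.2 ⟨haV, fun hc => ?_⟩
  have := (leaf_mem (T := T) hc).2
  have := outdeg_pos h
  omega

lemma tgt_ne_root {T : RPN n} (hn : 2 ≤ n) {a b : ℕ} (h : (a, b) ∈ T.E) :
    b ≠ T.root := by
  intro hb
  have := (T_deg T hn).1
  rw [← hb] at this
  have := indeg_pos h
  omega

lemma target_inj {T : RPN n} (hT : T.IsTree) (hn : 2 ≤ n) {e f : ℕ × ℕ}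
    (he : e ∈ T.E) (hf : f ∈ T.E) (h2 : e.2 = f.2) : e = f := by
  have hbV : e.2 ∈ T.V := (T.edge_mem _ he).2
  have hbr : e.2 ≠ T.root := by
    have := tgt_ne_root hn (a := e.1) (b := e.2) (by simpa using he)
    exact this
  have h1 : indeg T.E e.2 = 1 := indeg_one T hT hn _ hbV hbr
  by_contra hne
  have : 2 ≤ indeg T.E e.2 := by
    apply Finset.one_lt_card.2
    exact ⟨e, Finset.mem_filter.2 ⟨he, rfl⟩, f, Finset.mem_filter.2 ⟨hf, h2.symm⟩,
      hne⟩
  omega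

end TreeStructure
section Sigma

open scoped Classical

variable {n : ℕ}

/-- The number of (strict) ancestors of `v`. -/
noncomputable def ancT (T : RPN n) (v : ℕ) : ℕ :=
  (T.V.filter (fun u => Relation.TransGen (fun a b => (a, b) ∈ T.E) u v)).card

noncomputable def keyT (T : RPN n) (v : ℕ) : ℕ := ancT T v * (T.V.sup id + 1) + v

lemma lt_B {T : RPN n} {v : ℕ} (hv : v ∈ T.V) : v < T.V.sup id + 1 :=
  Nat.lt_succ_of_le (Finset.le_sup (f := id) hv)

lemma ancT_lt {T : RPN n} {a b : ℕ} (h : (a, b) ∈ T.E) : ancT T a < ancT T b := by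
  apply Finset.card_lt_card
  rw [Finset.ssubset_iff_of_subset]
  · exact ⟨a, Finset.mem_filter.2 ⟨(T.edge_mem _ h).1, Relation.TransGen.single h⟩,
      fun hc => T.acyclic a (Finset.mem_filter.1 hc).2⟩
  · intro u hu
    obtain ⟨huV, hua⟩ := Finset.mem_filter.1 hu
    exact Finset.mem_filter.2 ⟨huV, Relation.TransGen.tail hua h⟩

lemma keyT_lt {T : RPN n} {a b : ℕ} (h : (a, b) ∈ T.E) : keyT T a < keyT T b := by
  unfold keyT
  have h1 : ancT T a < ancT T b := ancT_lt h
  have h2 : a < T.V.sup id + 1 := lt_B (T.edge_mem _ h).1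
  nlinarith [Nat.le_of_lt_succ h2]

lemma keyT_inj {T : RPN n} {u v : ℕ} (hu : u ∈ T.V) (hv : v ∈ T.V)
    (h : keyT T u = keyT T v) : u = v := by
  unfold keyT at h
  have h1 := lt_B hu
  have h2 := lt_B hv
  rcases lt_trichotomy (ancT T u) (ancT T v) with hlt | heq | hlt
  · nlinarith
  · rw [heq] at h; omega
  · nlinarith

lemma ancT_root (T : RPN n) (hn : 2 ≤ n) : ancT T T.root = 0 := by
  unfold ancT
  rw [Finset.card_eq_zero, Finset.filter_eq_empty_iff]
  intro u _ htg
  obtain ⟨c, hc⟩ := transGen_last htg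
  have := indeg_pos hc
  have := (T_deg T hn).1
  omega

lemma keyT_root_min (T : RPN n) (hn : 2 ≤ n) {v : ℕ} (hv : v ∈ T.V)
    (hne : v ≠ T.root) : keyT T T.root < keyT T v := by
  have h1 : 1 ≤ ancT T v := by
    apply Finset.card_pos.2
    exact ⟨T.root, Finset.mem_filter.2 ⟨T.root_mem,
      reach_transGen (T.reach_root v hv) (Ne.symm hne)⟩⟩
  unfold keyT
  rw [ancT_root T hn]
  have := lt_B (T := T) T.root_mem
  nlinarith

/-- Topological rank of an internal vertex, with values in `1, …, k`. -/
noncomputable def sigT (T : RPN n) (v : ℕ) : ℕ :=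
  ((intl T).filter (fun u => keyT T u < keyT T v)).card + 1

lemma sigT_strict {T : RPN n} {u v : ℕ} (hu : u ∈ intl T) (_hv : v ∈ intl T)
    (h : keyT T u < keyT T v) : sigT T u < sigT T v := by
  unfold sigT
  have hss : (intl T).filter (fun w => keyT T w < keyT T u) ⊂
      (intl T).filter (fun w => keyT T w < keyT T v) := by
    rw [Finset.ssubset_iff_of_subset]
    · exact ⟨u, Finset.mem_filter.2 ⟨hu, h⟩, fun hc => by
        have := (Finset.mem_filter.1 hc).2; omega⟩
    · intro w hw
      obtain ⟨hw1, hw2⟩ := Finset.mem_filter.1 hw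
      exact Finset.mem_filter.2 ⟨hw1, lt_trans hw2 h⟩
  have := Finset.card_lt_card hss
  omega

lemma sigT_injOn {T : RPN n} {u v : ℕ} (hu : u ∈ intl T) (hv : v ∈ intl T)
    (h : sigT T u = sigT T v) : u = v := by
  by_contra hne
  have hkey : keyT T u ≠ keyT T v := fun hc =>
    hne (keyT_inj (Finset.mem_sdiff.1 hu).1 (Finset.mem_sdiff.1 hv).1 hc)
  rcases lt_or_gt_of_ne hkey with hlt | hlt
  · have := sigT_strict hu hv hlt; omega
  · have := sigT_strict hv hu hlt; omega

lemma sigT_root (T : RPN n) (hn : 2 ≤ n) : sigT T T.root = 1 := by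
  unfold sigT
  rw [Finset.filter_eq_empty_iff.2, Finset.card_empty]
  intro u hu
  obtain ⟨huV, _⟩ := Finset.mem_sdiff.1 hu
  by_cases hroot : u = T.root
  · subst hroot; omega
  · have := keyT_root_min T hn huV hroot
    omega

lemma sigT_mem {T : RPN n} {v : ℕ} (hv : v ∈ intl T) :
    sigT T v ∈ Finset.Icc 1 (intl T).card := by
  unfold sigT
  rw [Finset.mem_Icc]
  refine ⟨by omega, ?_⟩
  have hss : (intl T).filter (fun u => keyT T u < keyT T v) ⊆ (intl T).erase v := by
    intro w hw
    obtain ⟨hw1, hw2⟩ := Finset.mem_filter.1 hw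
    refine Finset.mem_erase.2 ⟨fun hc => ?_, hw1⟩
    subst hc; omega
  have := Finset.card_le_card hss
  rw [Finset.card_erase_of_mem hv] at this
  have : 0 < (intl T).card := Finset.card_pos.2 ⟨v, hv⟩
  omega

lemma sigT_image (T : RPN n) : (intl T).image (sigT T) = Finset.Icc 1 (intl T).card := by
  apply Finset.eq_of_subset_of_card_le
  · intro j hj
    obtain ⟨v, hv, rfl⟩ := Finset.mem_image.1 hj
    exact sigT_mem hv
  · rw [Nat.card_Icc]
    rw [Finset.card_image_of_injOn (fun u hu v hv h => sigT_injOn hu hv h)]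
    omega

lemma sigT_edge {T : RPN n} {a b : ℕ} (h : (a, b) ∈ T.E) (hb : b ∈ intl T) :
    sigT T a < sigT T b :=
  sigT_strict (edge_src_intl h) hb (keyT_lt h)

/-- The internal vertex with a given rank. -/
noncomputable def vOfT (T : RPN n) (j : ℕ) : ℕ :=
  if h : ∃ v ∈ intl T, sigT T v = j then h.choose else 0

lemma vOfT_spec {T : RPN n} {j : ℕ} (hj : j ∈ Finset.Icc 1 (intl T).card) :
    vOfT T j ∈ intl T ∧ sigT T (vOfT T j) = j := by
  have : ∃ v ∈ intl T, sigT T v = j := by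
    have := sigT_image T
    rw [← this] at hj
    obtain ⟨v, hv, hvj⟩ := Finset.mem_image.1 hj
    exact ⟨v, hv, hvj⟩
  rw [vOfT, dif_pos this]
  exact this.choose_spec

lemma vOfT_sig {T : RPN n} {v : ℕ} (hv : v ∈ intl T) : vOfT T (sigT T v) = v := by
  have hmem : sigT T v ∈ Finset.Icc 1 (intl T).card := sigT_mem hv
  obtain ⟨h1, h2⟩ := vOfT_spec hmem
  exact sigT_injOn h1 hv h2

lemma vOfT_one (T : RPN n) (hn : 2 ≤ n) : vOfT T 1 = T.root := by
  rw [← sigT_root T hn, vOfT_sig (root_mem_intl T hn)]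

lemma exists_leaf_child_max (T : RPN n) (hT : T.IsTree) (hn : 2 ≤ n) :
    ∃ ℓ ∈ Finset.Icc 1 n, (vOfT T (intl T).card, ℓ) ∈ T.E := by
  have hk : 1 ≤ (intl T).card := Finset.card_pos.2 ⟨T.root, root_mem_intl T hn⟩
  have hmem : (intl T).card ∈ Finset.Icc 1 (intl T).card := by
    rw [Finset.mem_Icc]; omega
  obtain ⟨hv, hs⟩ := vOfT_spec (T := T) hmem
  have hout : 2 ≤ outdeg T.E (vOfT T (intl T).card) := intl_out T hT hn _ hv
  have hpos : 0 < outdeg T.E (vOfT T (intl T).card) := by omega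
  obtain ⟨e, he⟩ := Finset.card_pos.1 hpos
  obtain ⟨heE, heq⟩ := Finset.mem_filter.1 he
  have hbV : e.2 ∈ T.V := (T.edge_mem _ heE).2
  refine ⟨e.2, ?_, by rw [← heq]; exact heE⟩
  by_contra hc
  have hbintl : e.2 ∈ intl T := Finset.mem_sdiff.2 ⟨hbV, hc⟩
  have := sigT_edge (a := e.1) (b := e.2) (by simpa using heE) hbintl
  rw [heq, hs] at this
  have := (Finset.mem_Icc.1 (sigT_mem hbintl)).2
  omega

end Sigma
section Network

/-- Vertex set of the universal network: leaves `1..n`, tree vertices `n+1..2n-1`,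
reticulations `2n+3..3n-1`, and per-leaf reticulations `3n+1..4n`. -/
def NetV (n : ℕ) : Finset ℕ :=
  (Finset.range (4*n+1)).filter (fun x =>
    (1 ≤ x ∧ x ≤ n) ∨ (n+1 ≤ x ∧ x ≤ 2*n-1) ∨ (2*n+3 ≤ x ∧ x ≤ 3*n-1) ∨ 3*n+1 ≤ x)

def NetE (n : ℕ) : Finset (ℕ × ℕ) :=
  ((Finset.range (4*n+1)) ×ˢ (Finset.range (4*n+1))).filter (fun p =>
    ((n+1 ≤ p.1 ∧ p.1 ≤ 2*n-1) ∧ 3*n+1 ≤ p.2) ∨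
    (3*n+1 ≤ p.1 ∧ p.2 + 3*n = p.1 ∧ 1 ≤ p.2) ∨
    (p.1 = n+1 ∧ p.2 = n+2 ∧ 3 ≤ n) ∨
    ((n+1 ≤ p.1 ∧ p.1 ≤ 2*n-1) ∧ (2*n+3 ≤ p.2 ∧ p.2 ≤ 3*n-1) ∧ p.1 + n < p.2) ∨
    ((2*n+3 ≤ p.1 ∧ p.1 ≤ 3*n-1) ∧ p.2 + n = p.1))

lemma mem_NetV {n x : ℕ} : x ∈ NetV n ↔ x < 4*n+1 ∧
    ((1 ≤ x ∧ x ≤ n) ∨ (n+1 ≤ x ∧ x ≤ 2*n-1) ∨ (2*n+3 ≤ x ∧ x ≤ 3*n-1) ∨ 3*n+1 ≤ x) := by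
  simp [NetV]

lemma mem_NetE {n : ℕ} {a b : ℕ} : (a, b) ∈ NetE n ↔ a < 4*n+1 ∧ b < 4*n+1 ∧
    (((n+1 ≤ a ∧ a ≤ 2*n-1) ∧ 3*n+1 ≤ b) ∨
    (3*n+1 ≤ a ∧ b + 3*n = a ∧ 1 ≤ b) ∨
    (a = n+1 ∧ b = n+2 ∧ 3 ≤ n) ∨
    ((n+1 ≤ a ∧ a ≤ 2*n-1) ∧ (2*n+3 ≤ b ∧ b ≤ 3*n-1) ∧ a + n < b) ∨
    ((2*n+3 ≤ a ∧ a ≤ 3*n-1) ∧ b + n = a)) := by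
  simp [NetE, Finset.mem_product, and_assoc]

/-- Grading of the universal network. -/
def grN (n x : ℕ) : ℕ :=
  if x ≤ n then 3*n+3 else if x ≤ 2*n-1 then 3*(x-n)
  else if x ≤ 3*n-1 then 3*(x-2*n)-1 else 3*n+1

lemma grN_edge {n : ℕ} (hn : 3 ≤ n) : ∀ e ∈ NetE n, grN n e.1 < grN n e.2 := by
  rintro ⟨a, b⟩ he
  rw [mem_NetE] at he
  simp only [grN]
  split_ifs <;> omega

lemma NetE_src_mem {n : ℕ} (hn : 3 ≤ n) {a b : ℕ} (h : (a, b) ∈ NetE n) :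
    a ∈ NetV n := by
  rw [mem_NetE] at h; rw [mem_NetV]; omega

lemma NetE_tgt_mem {n : ℕ} (hn : 3 ≤ n) {a b : ℕ} (h : (a, b) ∈ NetE n) :
    b ∈ NetV n := by
  rw [mem_NetE] at h; rw [mem_NetV]; omega

-- degree computations
lemma outdeg_leaf {n l : ℕ} (hl : l ≤ n) : outdeg (NetE n) l = 0 := by
  apply outdeg_eq_zero
  rintro ⟨a, b⟩ he rfl
  rw [mem_NetE] at he
  omega

lemma indeg_leaf {n l : ℕ} (hn : 3 ≤ n) (h1 : 1 ≤ l) (hl : l ≤ n) :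
    indeg (NetE n) l = 1 := by
  apply indeg_eq_one (u := 3*n + l)
  · rw [mem_NetE]; omega
  · rintro ⟨a, b⟩ he rfl
    rw [mem_NetE] at he
    have : a = 3*n + b := by omega
    simp [this]

lemma outdeg_s {n x : ℕ} (hn : 3 ≤ n) (h1 : 3*n+1 ≤ x) (h2 : x ≤ 4*n) :
    outdeg (NetE n) x = 1 := by
  apply outdeg_eq_one (v := x - 3*n)
  · rw [mem_NetE]; omega
  · rintro ⟨a, b⟩ he rfl
    rw [mem_NetE] at he
    have : b = a - 3*n := by omega
    simp [this]

lemma indeg_s {n x : ℕ} (hn : 3 ≤ n) (h1 : 3*n+1 ≤ x) (h2 : x ≤ 4*n) :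
    2 ≤ indeg (NetE n) x := by
  apply two_le_indeg (u := n+1) (v := n+2)
  · rw [mem_NetE]; omega
  · rw [mem_NetE]; omega
  · omega

lemma outdeg_r {n x : ℕ} (hn : 3 ≤ n) (h1 : 2*n+3 ≤ x) (h2 : x ≤ 3*n-1) :
    outdeg (NetE n) x = 1 := by
  apply outdeg_eq_one (v := x - n)
  · rw [mem_NetE]; omega
  · rintro ⟨a, b⟩ he rfl
    rw [mem_NetE] at he
    have : b = a - n := by omega
    simp [this]

lemma indeg_r {n x : ℕ} (hn : 3 ≤ n) (h1 : 2*n+3 ≤ x) (h2 : x ≤ 3*n-1) :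
    2 ≤ indeg (NetE n) x := by
  apply two_le_indeg (u := n+1) (v := n+2)
  · rw [mem_NetE]; omega
  · rw [mem_NetE]; omega
  · omega

lemma indeg_t1 {n : ℕ} (hn : 3 ≤ n) : indeg (NetE n) (n+1) = 0 := by
  apply indeg_eq_zero
  rintro ⟨a, b⟩ he rfl
  rw [mem_NetE] at he
  omega

lemma indeg_t2 {n : ℕ} (hn : 3 ≤ n) : indeg (NetE n) (n+2) = 1 := by
  apply indeg_eq_one (u := n+1)
  · rw [mem_NetE]; omega
  · rintro ⟨a, b⟩ he rfl
    rw [mem_NetE] at he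
    have : a = n+1 := by omega
    simp [this]

lemma indeg_t {n x : ℕ} (hn : 3 ≤ n) (h1 : n+3 ≤ x) (h2 : x ≤ 2*n-1) :
    indeg (NetE n) x = 1 := by
  apply indeg_eq_one (u := x + n)
  · rw [mem_NetE]; omega
  · rintro ⟨a, b⟩ he rfl
    rw [mem_NetE] at he
    have : a = b + n := by omega
    simp [this]

lemma outdeg_t {n x : ℕ} (hn : 3 ≤ n) (h1 : n+1 ≤ x) (h2 : x ≤ 2*n-1) :
    2 ≤ outdeg (NetE n) x := by
  apply two_le_outdeg (v := 3*n+1) (w := 3*n+2)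
  · rw [mem_NetE]; omega
  · rw [mem_NetE]; omega
  · omega

end Network
section NetRPN

/-- The universal network as an `RPN`. -/
def NetN (n : ℕ) (hn : 3 ≤ n) : RPN n where
  V := NetV n
  E := NetE n
  edge_mem := fun e he => ⟨NetE_src_mem hn (a := e.1) (b := e.2) (by simpa using he),
    NetE_tgt_mem hn (a := e.1) (b := e.2) (by simpa using he)⟩
  no_loop := by
    rintro ⟨a, b⟩ he
    rw [mem_NetE] at he
    simp only [ne_eq]
    omega
  root := n + 1
  root_mem := by rw [mem_NetV]; omega
  reach_root := by
    apply reach_of_grade (gr := grN n) (grN_edge hn)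
    intro v hv hne
    rw [mem_NetV] at hv
    by_cases h1 : v ≤ n
    · exact ⟨3*n + v, by rw [mem_NetV]; omega, by rw [mem_NetE]; omega⟩
    · by_cases h2 : v ≤ 2*n-1
      · by_cases h3 : v = n+2
        · exact ⟨n+1, by rw [mem_NetV]; omega, by rw [mem_NetE]; omega⟩
        · exact ⟨v + n, by rw [mem_NetV]; omega, by rw [mem_NetE]; omega⟩
      · by_cases h4 : v ≤ 3*n-1
        · exact ⟨n+1, by rw [mem_NetV]; omega, by rw [mem_NetE]; omega⟩
        · exact ⟨n+1, by rw [mem_NetV]; omega, by rw [mem_NetE]; omega⟩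
  acyclic := acyc_of_grade (grN_edge hn)
  leaves_eq := by
    ext x
    simp only [Finset.mem_filter, mem_NetV, Finset.mem_Icc]
    constructor
    · rintro ⟨⟨hx, hcase⟩, hout⟩
      rcases hcase with h | h | h | h
      · exact h
      · exfalso
        have := outdeg_t hn h.1 h.2
        omega
      · exfalso
        have := outdeg_r hn h.1 h.2
        omega
      · exfalso
        have := outdeg_s hn h (by omega)
        omega
    · intro h
      exact ⟨⟨by omega, Or.inl h⟩, outdeg_leaf h.2⟩
  degree_cond := by
    right
    refine ⟨indeg_t1 hn, outdeg_t hn (by omega) (by omega), ?_⟩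
    intro v hv hne
    rw [mem_NetV] at hv
    by_cases h1 : v ≤ n
    · left
      exact ⟨outdeg_leaf h1, indeg_leaf hn (by omega) h1⟩
    · by_cases h2 : v ≤ 2*n-1
      · right; left
        by_cases h3 : v = n+2
        · rw [h3]; exact ⟨indeg_t2 hn, outdeg_t hn (by omega) (by omega)⟩
        · exact ⟨indeg_t hn (by omega) h2, outdeg_t hn (by omega) h2⟩
      · by_cases h4 : v ≤ 3*n-1
        · right; right
          exact ⟨indeg_r hn (by omega) h4, outdeg_r hn (by omega) h4⟩
        · right; right
          exact ⟨indeg_s hn (by omega) (by omega), outdeg_s hn (by omega) (by omega)⟩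

lemma numReticulations_NetN (n : ℕ) (hn : 3 ≤ n) :
    numReticulations n (NetN n hn) ≤ (n-2)^2 + n := by
  have hsub : (NetV n).filter (fun v => 2 ≤ indeg (NetE n) v) ⊆
      (Finset.Icc (2*n+3) (3*n-1)) ∪ (Finset.Icc (3*n+1) (4*n)) := by
    intro x hx
    obtain ⟨hxV, hind⟩ := Finset.mem_filter.1 hx
    rw [mem_NetV] at hxV
    rw [Finset.mem_union, Finset.mem_Icc, Finset.mem_Icc]
    by_cases h1 : x ≤ n
    · exfalso
      rcases Nat.eq_zero_or_pos x with rfl | hpos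
      · omega
      · have := indeg_leaf hn hpos h1; omega
    · by_cases h2 : x ≤ 2*n-1
      · exfalso
        by_cases h3 : x = n+1
        · rw [h3] at hind; have := indeg_t1 hn; omega
        · by_cases h4 : x = n+2
          · rw [h4] at hind; have := indeg_t2 hn; omega
          · have := indeg_t hn (x := x) (by omega) h2; omega
      · omega
  have hcard := Finset.card_le_card hsub
  have hcard2 : ((Finset.Icc (2*n+3) (3*n-1)) ∪ (Finset.Icc (3*n+1) (4*n))).card ≤
      (Finset.Icc (2*n+3) (3*n-1)).card + (Finset.Icc (3*n+1) (4*n)).card :=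
    Finset.card_union_le _ _
  rw [Nat.card_Icc, Nat.card_Icc] at hcard2
  have hsq : n - 2 ≤ (n-2)^2 := by
    have : (n-2)^2 = (n-2) * (n-2) := sq (n-2) ▸ rfl
    nlinarith [Nat.sub_le n 2]
  unfold numReticulations
  simp only [NetN] at *
  exact le_trans hcard (by omega)

end NetRPN
section Thread

lemma pathE_tgt_inj {a b : ℕ} {l : List ℕ} (hnd : l.Nodup) (hb : b ∉ l)
    {e f : ℕ × ℕ} (he : e ∈ pathE a l b) (hf : f ∈ pathE a l b)
    (h2 : e.2 = f.2) : e = f := by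
  induction l generalizing a with
  | nil => simp [pathE] at he hf; rw [he, hf]
  | cons x l ih =>
    simp only [List.nodup_cons] at hnd
    simp only [List.mem_cons, not_or] at hb
    simp only [pathE, Finset.mem_insert] at he hf
    rcases he with rfl | he <;> rcases hf with rfl | hf
    · rfl
    · exfalso
      rcases pathE_snd hf with h | h
      · rw [← h2] at h; exact hnd.1 h
      · rw [← h2] at h; exact hb.1 h.symm
    · exfalso
      rcases pathE_snd he with h | h
      · rw [h2] at h; exact hnd.1 h
      · rw [h2] at h; exact hb.1 h.symm
    · exact ih hnd.2 hb.2 he hf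

lemma pathE_last (a b : ℕ) (l : List ℕ) : ∃ c, (c, b) ∈ pathE a l b := by
  induction l generalizing a with
  | nil => exact ⟨a, by simp [pathE]⟩
  | cons x l ih =>
    obtain ⟨c, hc⟩ := ih x
    exact ⟨c, by simp only [pathE, Finset.mem_insert]; right; exact hc⟩

lemma pathE_mid_tgt {x : ℕ} {l : List ℕ} (hx : x ∈ l) (a b : ℕ) :
    ∃ c, (c, x) ∈ pathE a l b := by
  induction l generalizing a with
  | nil => simp at hx
  | cons y l ih =>
    rcases List.mem_cons.1 hx with rfl | hx
    · exact ⟨a, by simp [pathE]⟩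
    · obtain ⟨c, hc⟩ := ih hx y
      exact ⟨c, by simp only [pathE, Finset.mem_insert]; right; exact hc⟩

lemma pathE_mid_src {x : ℕ} {l : List ℕ} (hx : x = a ∨ x ∈ l) (b : ℕ) :
    ∃ c, (x, c) ∈ pathE a l b := by
  induction l generalizing a with
  | nil =>
    rcases hx with rfl | hx
    · exact ⟨b, by simp [pathE]⟩
    · simp at hx
  | cons y l ih =>
    rcases hx with rfl | hx
    · exact ⟨y, by simp [pathE]⟩
    · rcases List.mem_cons.1 hx with rfl | hx
      · obtain ⟨c, hc⟩ := ih (Or.inl rfl) (a := x)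
        exact ⟨c, by simp only [pathE, Finset.mem_insert]; right; exact hc⟩
      · obtain ⟨c, hc⟩ := ih (Or.inr hx) (a := y)
        exact ⟨c, by simp only [pathE, Finset.mem_insert]; right; exact hc⟩

/-- The thread of intermediate vertices from `t_j` down to `t_{n-1}`. -/
def thr (n : ℕ) : ℕ → ℕ → List ℕ
  | _, 0 => []
  | j, c+1 => (if j + 1 = 2 then [n+2] else [2*n+(j+1), n+(j+1)]) ++ thr n (j+1) c

lemma mem_thr {n : ℕ} : ∀ (c j x : ℕ), 1 ≤ j →
    (x ∈ thr n j c ↔ ∃ m, j < m ∧ m ≤ j + c ∧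
      ((m = 2 ∧ x = n+2) ∨ (3 ≤ m ∧ (x = 2*n+m ∨ x = n+m)))) := by
  intro c
  induction c with
  | zero =>
    intro j x _
    simp only [thr, List.not_mem_nil, false_iff]
    rintro ⟨m, h1, h2, _⟩
    omega
  | succ c ih =>
    intro j x hj
    simp only [thr, List.mem_append]
    rw [ih (j+1) x (by omega)]
    constructor
    · rintro (h | ⟨m, h1, h2, h3⟩)
      · by_cases hj2 : j + 1 = 2
        · rw [if_pos hj2] at h
          simp at h
          exact ⟨2, by omega, by omega, Or.inl ⟨rfl, h⟩⟩
        · rw [if_neg hj2] at h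
          simp at h
          exact ⟨j+1, by omega, by omega, Or.inr ⟨by omega, h⟩⟩
      · exact ⟨m, by omega, by omega, h3⟩
    · rintro ⟨m, h1, h2, h3⟩
      by_cases hm : m = j + 1
      · left
        subst hm
        by_cases hj2 : j + 1 = 2
        · rw [if_pos hj2]
          rcases h3 with ⟨_, rfl⟩ | ⟨h4, _⟩
          · simp
          · omega
        · rw [if_neg hj2]
          rcases h3 with ⟨h4, _⟩ | ⟨h4, rfl | rfl⟩
          · omega
          · simp
          · simp
      · right
        exact ⟨m, by omega, by omega, h3⟩

lemma thr_nodup {n : ℕ} (hn : 3 ≤ n) : ∀ (c j : ℕ), 1 ≤ j → j + c ≤ n - 1 →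
    (thr n j c).Nodup := by
  intro c
  induction c with
  | zero => intro j _ _; simp [thr]
  | succ c ih =>
    intro j hj hb
    simp only [thr]
    rw [List.nodup_append]
    refine ⟨?_, ih (j+1) (by omega) (by omega), ?_⟩
    · split_ifs <;> simp <;> omega
    · intro x hx y hx' hxy; subst hxy
      rw [mem_thr c (j+1) x (by omega)] at hx'
      obtain ⟨m, h1, h2, h3⟩ := hx'
      split_ifs at hx with hj2
      · simp at hx
        subst hx
        rcases h3 with ⟨h4, h5⟩ | ⟨h4, h5 | h5⟩ <;> omega
      · simp at hx
        rcases hx with rfl | rfl <;> rcases h3 with ⟨h4, h5⟩ | ⟨h4, h5 | h5⟩ <;> omega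

lemma thr_path_sub {n ℓ : ℕ} (hn : 3 ≤ n) (hl1 : 1 ≤ ℓ) (hl2 : ℓ ≤ n) :
    ∀ (c j : ℕ), 1 ≤ j → j + c = n - 1 →
    ∀ e ∈ pathE (n+j) (thr n j c ++ [3*n+ℓ]) ℓ, e ∈ NetE n := by
  intro c
  induction c with
  | zero =>
    intro j hj hjc e he
    simp only [thr, List.nil_append, pathE, Finset.mem_insert, Finset.mem_singleton] at he
    rcases he with rfl | rfl
    · rw [mem_NetE]; omega
    · rw [mem_NetE]; omega
  | succ c ih =>
    intro j hj hjc e he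
    by_cases hj2 : j + 1 = 2
    · simp only [thr, if_pos hj2, List.cons_append, List.nil_append, pathE,
        Finset.mem_insert] at he
      rcases he with rfl | he
      · rw [mem_NetE]; omega
      · have hrw : n + (j + 1) = n + 2 := by omega
        apply ih (j+1) (by omega) (by omega) e
        rw [hrw]
        exact he
    · simp only [thr, if_neg hj2, List.cons_append, List.nil_append, pathE,
        Finset.mem_insert] at he
      rcases he with rfl | rfl | he
      · rw [mem_NetE]; omega
      · rw [mem_NetE]; omega
      · exact ih (j+1) (by omega) (by omega) e he

end Thread
section Embed

variable {n : ℕ}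

/-- Embedding of the vertices of `T` into the universal network. -/
noncomputable def psi (T : RPN n) (x : ℕ) : ℕ :=
  if 1 ≤ x ∧ x ≤ n then x else n + sigT T x

noncomputable def astar (T : RPN n) : ℕ := vOfT T (intl T).card

open scoped Classical in
noncomputable def lstar (T : RPN n) : ℕ :=
  if h : ∃ ℓ ∈ Finset.Icc 1 n, (astar T, ℓ) ∈ T.E then h.choose else 0

noncomputable def stdmid (T : RPN n) (e : ℕ × ℕ) : List ℕ :=
  if 1 ≤ e.2 ∧ e.2 ≤ n then [3*n + e.2]
  else if sigT T e.2 = 2 then [] else [2*n + sigT T e.2]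

noncomputable def trip (T : RPN n) (e : ℕ × ℕ) : ℕ × List ℕ × ℕ :=
  if e = (astar T, lstar T) then
    (n + (intl T).card,
      thr n (intl T).card (n - 1 - (intl T).card) ++ [3*n + lstar T], lstar T)
  else (n + sigT T e.1, stdmid T e, psi T e.2)

noncomputable def tripsL (T : RPN n) : List (ℕ × List ℕ × ℕ) := T.E.toList.map (trip T)

variable {T : RPN n}

lemma k_pos (hn : 3 ≤ n) : 1 ≤ (intl T).card :=
  Finset.card_pos.2 ⟨T.root, root_mem_intl T (by omega)⟩

lemma k_le (hT : T.IsTree) (hn : 3 ≤ n) : (intl T).card ≤ n - 1 :=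
  intl_card_le T hT (by omega)

lemma star_spec (hT : T.IsTree) (hn : 3 ≤ n) :
    lstar T ∈ Finset.Icc 1 n ∧ (astar T, lstar T) ∈ T.E := by
  have h : ∃ ℓ ∈ Finset.Icc 1 n, (astar T, ℓ) ∈ T.E :=
    exists_leaf_child_max T hT (by omega)
  classical
  rw [lstar]
  rw [dif_pos h]
  exact h.choose_spec

lemma astar_spec (hn : 3 ≤ n) :
    astar T ∈ intl T ∧ sigT T (astar T) = (intl T).card := by
  apply vOfT_spec
  rw [Finset.mem_Icc]
  exact ⟨k_pos hn, le_refl _⟩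

lemma psi_leaf {x : ℕ} (hx : x ∈ Finset.Icc 1 n) : psi T x = x := by
  rw [Finset.mem_Icc] at hx
  rw [psi, if_pos hx]

lemma psi_intl {v : ℕ} (hv : v ∈ intl T) : psi T v = n + sigT T v := by
  have := (Finset.mem_sdiff.1 hv).2
  rw [Finset.mem_Icc] at this
  rw [psi, if_neg this]

lemma sig_bounds {v : ℕ} (hv : v ∈ intl T) :
    1 ≤ sigT T v ∧ sigT T v ≤ (intl T).card := by
  have := sigT_mem hv
  rw [Finset.mem_Icc] at this
  exact this

lemma tgt_cases {e : ℕ × ℕ} (he : e ∈ T.E) :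
    e.2 ∈ Finset.Icc 1 n ∨ e.2 ∈ intl T := by
  have := (T.edge_mem e he).2
  by_cases h : e.2 ∈ Finset.Icc 1 n
  · exact Or.inl h
  · exact Or.inr (Finset.mem_sdiff.2 ⟨this, h⟩)

lemma sig_tgt (hn : 3 ≤ n) {e : ℕ × ℕ} (he : e ∈ T.E) (h : e.2 ∈ intl T) :
    2 ≤ sigT T e.2 ∧ sigT T e.2 ≤ (intl T).card ∧ sigT T e.1 < sigT T e.2 := by
  have hlt : sigT T e.1 < sigT T e.2 := sigT_edge (a := e.1) (b := e.2) (by simpa using he) h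
  have h1 := sig_bounds (edge_src_intl (a := e.1) (b := e.2) (by simpa using he))
  have h2 := sig_bounds h
  exact ⟨by omega, h2.2, hlt⟩

lemma psi_inj {u v : ℕ} (hu : u ∈ T.V) (hv : v ∈ T.V) (h : psi T u = psi T v) :
    u = v := by
  have hu' := V_eq_union T ▸ hu
  have hv' := V_eq_union T ▸ hv
  rw [Finset.mem_union] at hu' hv'
  rcases hu' with hu' | hu' <;> rcases hv' with hv' | hv'
  · rwa [psi_leaf hu', psi_leaf hv'] at h
  · rw [psi_leaf hu', psi_intl hv'] at h
    have := Finset.mem_Icc.1 hu'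
    have := (sig_bounds hv').1
    omega
  · rw [psi_intl hu', psi_leaf hv'] at h
    have := Finset.mem_Icc.1 hv'
    have := (sig_bounds hu').1
    omega
  · rw [psi_intl hu', psi_intl hv'] at h
    exact sigT_injOn hu' hv' (by omega)

lemma tgt_eq {e f : ℕ × ℕ} (hT : T.IsTree) (hn : 3 ≤ n) (he : e ∈ T.E)
    (hf : f ∈ T.E) (h : e.2 = f.2) : e = f := target_inj hT (by omega) he hf h

lemma psi_tgt_inj {e f : ℕ × ℕ} (hT : T.IsTree) (hn : 3 ≤ n) (he : e ∈ T.E)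
    (hf : f ∈ T.E) (h : psi T e.2 = psi T f.2) : e = f :=
  tgt_eq hT hn he hf (psi_inj (T.edge_mem e he).2 (T.edge_mem f hf).2 h)

lemma trip_fst (hn : 3 ≤ n) {e : ℕ × ℕ} :
    (trip T e).1 = n + sigT T e.1 := by
  rw [trip]
  split_ifs with h
  · rw [h]
    simp [(astar_spec hn).2]
  · rfl

lemma trip_tgt (hT : T.IsTree) (hn : 3 ≤ n) {e : ℕ × ℕ} :
    (trip T e).2.2 = psi T e.2 := by
  rw [trip]
  split_ifs with h
  · rw [h]
    simp [psi_leaf (star_spec hT hn).1]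
  · rfl

/-- Classification of the intermediate vertices of a triple. -/
lemma mem_trip_mid (hT : T.IsTree) (hn : 3 ≤ n) {e : ℕ × ℕ} (he : e ∈ T.E) {x : ℕ}
    (hx : x ∈ (trip T e).2.1) :
    (e ≠ (astar T, lstar T) ∧ e.2 ∈ Finset.Icc 1 n ∧ x = 3*n + e.2) ∨
    (e ≠ (astar T, lstar T) ∧ e.2 ∈ intl T ∧ 3 ≤ sigT T e.2 ∧
      sigT T e.2 ≤ (intl T).card ∧ x = 2*n + sigT T e.2) ∨
    (e = (astar T, lstar T) ∧ (x = 3*n + lstar T ∨ ∃ m, (intl T).card < m ∧ m ≤ n-1 ∧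
      ((m = 2 ∧ x = n+2) ∨ (3 ≤ m ∧ (x = 2*n+m ∨ x = n+m))))) := by
  rw [trip] at hx
  split_ifs at hx with hstar
  · right; right
    refine ⟨hstar, ?_⟩
    simp only [List.mem_append, List.mem_singleton] at hx
    rcases hx with hx | hx
    · right
      rw [mem_thr _ _ _ (k_pos hn)] at hx
      obtain ⟨m, h1, h2, h3⟩ := hx
      have := k_le hT hn
      exact ⟨m, h1, by omega, h3⟩
    · left; exact hx
  · rw [stdmid] at hx
    split_ifs at hx with h1 h2
    · left
      simp only [List.mem_singleton] at hx
      exact ⟨hstar, Finset.mem_Icc.2 h1, hx⟩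
    · simp at hx
    · right; left
      simp only [List.mem_singleton] at hx
      rcases tgt_cases he with h | h
      · exfalso
        have := Finset.mem_Icc.1 h
        exact h1 this
      · have h3 := sig_tgt hn he h
        exact ⟨hstar, h, by omega, h3.2.1, hx⟩

end Embed
section MidFacts

variable {n : ℕ} {T : RPN n}

lemma mem_tripsL {t : ℕ × List ℕ × ℕ} :
    t ∈ tripsL T ↔ ∃ e ∈ T.E, t = trip T e := by
  simp only [tripsL, List.mem_map, Finset.mem_toList]
  constructor
  · rintro ⟨e, he, rfl⟩; exact ⟨e, he, rfl⟩
  · rintro ⟨e, he, rfl⟩; exact ⟨e, he, rfl⟩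

lemma nodup_midsL_of (f : (ℕ×ℕ) → ℕ × List ℕ × ℕ) :
    ∀ es : List (ℕ×ℕ), es.Nodup →
    (∀ e ∈ es, (f e).2.1.Nodup) →
    (∀ e ∈ es, ∀ e' ∈ es, e ≠ e' → ∀ x ∈ (f e).2.1, x ∉ (f e').2.1) →
    (midsL (es.map f)).Nodup := by
  intro es
  induction es with
  | nil => intro _ _ _; simp [midsL]
  | cons e es ih =>
    intro hnd hper hdis
    rw [List.nodup_cons] at hnd
    have : midsL ((e :: es).map f) = (f e).2.1 ++ midsL (es.map f) := by
      simp [midsL]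
    rw [this, List.nodup_append]
    refine ⟨hper e (by simp), ih hnd.2 (fun e' he' => hper e' (by simp [he']))
      (fun e1 h1 e2 h2 => hdis e1 (by simp [h1]) e2 (by simp [h2])), ?_⟩
    intro x hx y hx' hxy; subst hxy
    rw [mem_midsL] at hx'
    obtain ⟨t', ht', hxt⟩ := hx'
    obtain ⟨e', he', rfl⟩ := List.mem_map.1 ht'
    have hne : e ≠ e' := fun h => hnd.1 (h ▸ he')
    exact hdis e (by simp) e' (by simp [he']) hne x hx hxt

lemma trip_mid_nodup (hT : T.IsTree) (hn : 3 ≤ n) {e : ℕ × ℕ} :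
    (trip T e).2.1.Nodup := by
  rw [trip]
  split_ifs with h
  · simp only
    rw [List.nodup_append]
    refine ⟨thr_nodup hn _ _ (k_pos hn) (by have := k_le hT hn; omega), by simp, ?_⟩
    intro x hx y hx' hxy; subst hxy
    simp only [List.mem_singleton] at hx'
    rw [mem_thr _ _ _ (k_pos hn)] at hx
    obtain ⟨m, h1, h2, h3⟩ := hx
    have := k_le hT hn
    have hl := Finset.mem_Icc.1 (star_spec hT hn).1
    rcases h3 with ⟨h4, h5⟩ | ⟨h4, h5 | h5⟩ <;> omega
  · rw [stdmid]
    split_ifs <;> simp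

lemma mid_disjoint (hT : T.IsTree) (hn : 3 ≤ n) :
    ∀ e ∈ T.E, ∀ e' ∈ T.E, e ≠ e' →
      ∀ x ∈ (trip T e).2.1, x ∉ (trip T e').2.1 := by
  intro e he e' he' hne x hx hx'
  have hl := Finset.mem_Icc.1 (star_spec hT hn).1
  have hk1 := k_pos (T := T) hn
  have hk2 := k_le hT hn
  rcases mem_trip_mid hT hn he hx with ⟨hs, h1, h2⟩ | ⟨hs, h1, h2, h3, h4⟩ | ⟨hs, hth⟩ <;>
    rcases mem_trip_mid hT hn he' hx' with ⟨hs', h1', h2'⟩ | ⟨hs', h1', h2', h3', h4'⟩ |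
      ⟨hs', hth'⟩
  · -- both leaf-mids
    have hb := Finset.mem_Icc.1 h1
    have hb' := Finset.mem_Icc.1 h1'
    exact hne (tgt_eq hT hn he he' (by omega))
  · have hb := Finset.mem_Icc.1 h1
    omega
  · have hb := Finset.mem_Icc.1 h1
    rcases hth' with h | ⟨m, hm1, hm2, hm3⟩
    · -- x = 3n + lstar: e.2 = lstar so e = star
      apply hs
      apply tgt_eq hT hn he (hs' ▸ he')
      show e.2 = lstar T
      omega
    · rcases hm3 with ⟨hm4, hm5⟩ | ⟨hm4, hm5 | hm5⟩ <;> omega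
  · have hb' := Finset.mem_Icc.1 h1'
    omega
  · -- both internal r-mids
    have : sigT T e.2 = sigT T e'.2 := by omega
    exact hne (tgt_eq hT hn he he' (sigT_injOn h1 h1' this))
  · rcases hth' with h | ⟨m, hm1, hm2, hm3⟩
    · omega
    · rcases hm3 with ⟨hm4, hm5⟩ | ⟨hm4, hm5 | hm5⟩ <;> omega
  · rcases hth with h | ⟨m, hm1, hm2, hm3⟩
    · have hb' := Finset.mem_Icc.1 h1'
      apply hs'
      apply tgt_eq hT hn he' (hs ▸ he)
      show e'.2 = lstar T
      omega
    · have hb' := Finset.mem_Icc.1 h1'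
      rcases hm3 with ⟨hm4, hm5⟩ | ⟨hm4, hm5 | hm5⟩ <;> omega
  · rcases hth with h | ⟨m, hm1, hm2, hm3⟩
    · omega
    · rcases hm3 with ⟨hm4, hm5⟩ | ⟨hm4, hm5 | hm5⟩ <;> omega
  · exact hne (hs.trans hs'.symm)

end MidFacts
section Cover

variable {n : ℕ} {T : RPN n}

lemma mem_pathsE_of {L : List (ℕ × List ℕ × ℕ)} {t : ℕ × List ℕ × ℕ} (ht : t ∈ L)
    {e : ℕ × ℕ} (he : e ∈ pathE t.1 t.2.1 t.2.2) : e ∈ pathsE L := by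
  induction L with
  | nil => simp at ht
  | cons s L ih =>
    rcases List.mem_cons.1 ht with rfl | ht
    · exact Finset.mem_union_left _ he
    · exact Finset.mem_union_right _ (ih ht)

lemma mids_NetV (hT : T.IsTree) (hn : 3 ≤ n) :
    ∀ x ∈ midsL (tripsL T), x ∈ NetV n := by
  intro x hx
  obtain ⟨t, ht, hxt⟩ := mem_midsL.1 hx
  obtain ⟨e, he, rfl⟩ := mem_tripsL.1 ht
  have hk1 := k_pos (T := T) hn
  have hk2 := k_le hT hn
  have hl := Finset.mem_Icc.1 (star_spec hT hn).1
  rcases mem_trip_mid hT hn he hxt with ⟨_, h1, h2⟩ | ⟨_, h1, h2, h3, h4⟩ | ⟨_, hth⟩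
  · have hb := Finset.mem_Icc.1 h1
    rw [mem_NetV]; omega
  · rw [mem_NetV]; omega
  · rcases hth with h | ⟨m, hm1, hm2, hm3⟩
    · rw [mem_NetV]; omega
    · rcases hm3 with ⟨hm4, hm5⟩ | ⟨hm4, hm5 | hm5⟩ <;> (rw [mem_NetV]; omega)

lemma mids_fresh (hT : T.IsTree) (hn : 3 ≤ n) :
    ∀ x ∈ midsL (tripsL T), ∀ t ∈ tripsL T, t.1 ≠ x ∧ t.2.2 ≠ x := by
  intro x hx t ht
  obtain ⟨t0, ht0, hxt⟩ := mem_midsL.1 hx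
  obtain ⟨e, he, rfl⟩ := mem_tripsL.1 ht0
  obtain ⟨e', he', rfl⟩ := mem_tripsL.1 ht
  have hk1 := k_pos (T := T) hn
  have hk2 := k_le hT hn
  have hl := Finset.mem_Icc.1 (star_spec hT hn).1
  have hsrc := sig_bounds (edge_src_intl (a := e'.1) (b := e'.2) (by simpa using he'))
  rw [trip_fst hn, trip_tgt hT hn]
  have htgt : (1 ≤ psi T e'.2 ∧ psi T e'.2 ≤ n) ∨
      (2 ≤ sigT T e'.2 ∧ sigT T e'.2 ≤ (intl T).card ∧ psi T e'.2 = n + sigT T e'.2) := by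
    rcases tgt_cases he' with h | h
    · left
      rw [psi_leaf h]
      exact Finset.mem_Icc.1 h
    · right
      have := sig_tgt hn he' h
      exact ⟨this.1, this.2.1, psi_intl h⟩
  rcases mem_trip_mid hT hn he hxt with ⟨_, h1, h2⟩ | ⟨_, h1, h2, h3, h4⟩ | ⟨_, hth⟩
  · have hb := Finset.mem_Icc.1 h1
    rcases htgt with ⟨ha, hb'⟩ | ⟨ha, hb', hc⟩ <;> constructor <;> omega
  · rcases htgt with ⟨ha, hb'⟩ | ⟨ha, hb', hc⟩ <;> constructor <;> omega
  · rcases hth with h | ⟨m, hm1, hm2, hm3⟩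
    · rcases htgt with ⟨ha, hb'⟩ | ⟨ha, hb', hc⟩ <;> constructor <;> omega
    · rcases hm3 with ⟨hm4, hm5⟩ | ⟨hm4, hm5 | hm5⟩ <;>
        rcases htgt with ⟨ha, hb'⟩ | ⟨ha, hb', hc⟩ <;> constructor <;> omega

lemma trip_ne (hT : T.IsTree) (hn : 3 ≤ n) :
    ∀ t ∈ tripsL T, t.1 ≠ t.2.2 := by
  intro t ht
  obtain ⟨e, he, rfl⟩ := mem_tripsL.1 ht
  rw [trip_fst hn, trip_tgt hT hn]
  have hsrc := sig_bounds (edge_src_intl (a := e.1) (b := e.2) (by simpa using he))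
  rcases tgt_cases he with h | h
  · rw [psi_leaf h]
    have := Finset.mem_Icc.1 h
    omega
  · rw [psi_intl h]
    have := sig_tgt hn he h
    omega

lemma E'_sub (hT : T.IsTree) (hn : 3 ≤ n) :
    ∀ e ∈ pathsE (tripsL T), e ∈ NetE n := by
  intro e he
  obtain ⟨t, ht, het⟩ := mem_pathsE he
  obtain ⟨e', he', rfl⟩ := mem_tripsL.1 ht
  have hk1 := k_pos (T := T) hn
  have hk2 := k_le hT hn
  have hl := Finset.mem_Icc.1 (star_spec hT hn).1
  have hsrc := sig_bounds (edge_src_intl (a := e'.1) (b := e'.2) (by simpa using he'))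
  rw [trip] at het
  split_ifs at het with hstar
  · exact thr_path_sub hn hl.1 hl.2 _ _ hk1 (by omega) e het
  · rw [stdmid] at het
    split_ifs at het with h1 h2
    · simp only [pathE, Finset.mem_insert, Finset.mem_singleton] at het
      have hpsi : psi T e'.2 = e'.2 := psi_leaf (Finset.mem_Icc.2 h1)
      rcases het with rfl | rfl
      · rw [mem_NetE]; omega
      · rw [hpsi, mem_NetE]; omega
    · simp only [pathE, Finset.mem_singleton] at het
      have hintl : e'.2 ∈ intl T := by
        rcases tgt_cases he' with h | h
        · exact absurd (Finset.mem_Icc.1 h) h1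
        · exact h
      have hpsi : psi T e'.2 = n + sigT T e'.2 := psi_intl hintl
      have hs := sig_tgt hn he' hintl
      subst het
      rw [hpsi, mem_NetE]
      omega
    · simp only [pathE, Finset.mem_insert, Finset.mem_singleton] at het
      have hintl : e'.2 ∈ intl T := by
        rcases tgt_cases he' with h | h
        · exact absurd (Finset.mem_Icc.1 h) h1
        · exact h
      have hpsi : psi T e'.2 = n + sigT T e'.2 := psi_intl hintl
      have hs := sig_tgt hn he' hintl
      rcases het with rfl | rfl <;> (rw [mem_NetE]; try rw [hpsi]) <;> omega

lemma endpoint_not_mid (hT : T.IsTree) (hn : 3 ≤ n) {t : ℕ × List ℕ × ℕ}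
    (ht : t ∈ tripsL T) : t.2.2 ∉ t.2.1 := by
  intro hc
  have hx : t.2.2 ∈ midsL (tripsL T) := mem_midsL.2 ⟨t, ht, hc⟩
  exact (mids_fresh hT hn _ hx t ht).2 rfl

lemma E'_tgt_inj (hT : T.IsTree) (hn : 3 ≤ n) :
    ∀ e ∈ pathsE (tripsL T), ∀ f ∈ pathsE (tripsL T), e.2 = f.2 → e = f := by
  intro e he f hf h2
  obtain ⟨t, ht, het⟩ := mem_pathsE he
  obtain ⟨t', ht', hft⟩ := mem_pathsE hf
  obtain ⟨u, hu, rfl⟩ := mem_tripsL.1 ht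
  obtain ⟨w, hw, rfl⟩ := mem_tripsL.1 ht'
  by_cases huw : u = w
  · subst huw
    exact pathE_tgt_inj (trip_mid_nodup hT hn) (endpoint_not_mid hT hn ht) het hft h2
  · exfalso
    have hce : e.2 ∈ (trip T u).2.1 ∨ e.2 = (trip T u).2.2 := pathE_snd het
    have hcf : f.2 ∈ (trip T w).2.1 ∨ f.2 = (trip T w).2.2 := pathE_snd hft
    rcases hce with hce | hce <;> rcases hcf with hcf | hcf
    · exact mid_disjoint hT hn u hu w hw huw e.2 hce (h2 ▸ hcf)
    · apply (mids_fresh hT hn f.2 (mem_midsL.2 ⟨trip T u, ht, h2 ▸ hce⟩)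
        (trip T w) ht').2
      exact hcf.symm
    · apply (mids_fresh hT hn e.2 (mem_midsL.2 ⟨trip T w, ht', h2 ▸ hcf⟩)
        (trip T u) ht).2
      exact hce.symm
    · rw [trip_tgt hT hn] at hce hcf
      apply huw
      apply psi_tgt_inj hT hn hu hw
      rw [← hce, ← hcf, h2]

lemma exists_out_ne_star (hT : T.IsTree) (hn : 3 ≤ n) {w : ℕ} (hw : w ∈ intl T) :
    ∃ e ∈ T.E, e.1 = w ∧ e ≠ (astar T, lstar T) := by
  have h2 : 2 ≤ outdeg T.E w := intl_out T hT (by omega) w hw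
  have h2' : 1 < (T.E.filter (fun e => e.1 = w)).card := by
    have h3 : outdeg T.E w = (T.E.filter (fun e => e.1 = w)).card := rfl
    omega
  obtain ⟨e1, he1, e2, he2, hne⟩ := Finset.one_lt_card.1 h2'
  obtain ⟨he1E, he1s⟩ := Finset.mem_filter.1 he1
  obtain ⟨he2E, he2s⟩ := Finset.mem_filter.1 he2
  by_cases h : e1 = (astar T, lstar T)
  · exact ⟨e2, he2E, he2s, fun hc => hne (h.trans hc.symm)⟩
  · exact ⟨e1, he1E, he1s, h⟩

lemma in_edge_of (hT : T.IsTree) (hn : 3 ≤ n) {v : ℕ} (hv : v ∈ T.V)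
    (hne : v ≠ T.root) : ∃ e ∈ T.E, e.2 = v := by
  obtain ⟨u, hu⟩ := exists_in_edge hv hne
  exact ⟨(u, v), hu, rfl⟩

lemma vOf_ne_root {j : ℕ} (hn : 3 ≤ n) (hj1 : 2 ≤ j) (hj2 : j ≤ (intl T).card) :
    vOfT T j ∈ intl T ∧ sigT T (vOfT T j) = j ∧ vOfT T j ≠ T.root := by
  obtain ⟨h1, h2⟩ := vOfT_spec (T := T) (j := j) (by rw [Finset.mem_Icc]; omega)
  refine ⟨h1, h2, fun hc => ?_⟩
  rw [hc, sigT_root T (by omega)] at h2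
  omega

end Cover
section Cover2

variable {n : ℕ} {T : RPN n}

lemma star_mem_tripsL (hT : T.IsTree) (hn : 3 ≤ n) :
    trip T (astar T, lstar T) ∈ tripsL T :=
  mem_tripsL.2 ⟨_, (star_spec hT hn).2, rfl⟩

lemma star_trip_eq (hT : T.IsTree) (hn : 3 ≤ n) :
    trip T (astar T, lstar T) = (n + (intl T).card,
      thr n (intl T).card (n - 1 - (intl T).card) ++ [3*n + lstar T], lstar T) := by
  rw [trip, if_pos rfl]

lemma thr_mem_of {m : ℕ} (hT : T.IsTree) (hn : 3 ≤ n) (hm1 : (intl T).card < m)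
    (hm2 : m ≤ n - 1) {x : ℕ} (hx : (m = 2 ∧ x = n+2) ∨ (3 ≤ m ∧ (x = 2*n+m ∨ x = n+m))) :
    x ∈ thr n (intl T).card (n - 1 - (intl T).card) := by
  rw [mem_thr _ _ _ (k_pos hn)]
  have := k_le hT hn
  exact ⟨m, hm1, by omega, hx⟩

lemma nonstar_trip_eq {e : ℕ × ℕ} (hne : e ≠ (astar T, lstar T)) :
    trip T e = (n + sigT T e.1, stdmid T e, psi T e.2) := by
  rw [trip, if_neg hne]

lemma tgt_star_iff (hT : T.IsTree) (hn : 3 ≤ n) {e : ℕ × ℕ} (he : e ∈ T.E) :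
    e.2 = lstar T → e = (astar T, lstar T) :=
  fun h => tgt_eq hT hn he (star_spec hT hn).2 h

lemma E'_tgt_cover (hT : T.IsTree) (hn : 3 ≤ n) :
    ∀ v ∈ NetV n, v ≠ n+1 → ∃ e ∈ pathsE (tripsL T), e.2 = v := by
  intro v hv hne
  have hk1 := k_pos (T := T) hn
  have hk2 := k_le hT hn
  have hl := Finset.mem_Icc.1 (star_spec hT hn).1
  rw [mem_NetV] at hv
  by_cases hc1 : v ≤ n
  · -- leaf
    have hvIcc : v ∈ Finset.Icc 1 n := Finset.mem_Icc.2 ⟨by omega, hc1⟩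
    obtain ⟨e, he, he2⟩ := in_edge_of hT hn (leaf_mem hvIcc).1
      (fun hc => root_not_leaf T (by omega) (hc ▸ hvIcc))
    obtain ⟨c, hc⟩ := pathE_last (trip T e).1 (trip T e).2.2 (trip T e).2.1
    refine ⟨(c, (trip T e).2.2), mem_pathsE_of (mem_tripsL.2 ⟨e, he, rfl⟩) hc, ?_⟩
    rw [trip_tgt hT hn, he2]
    exact psi_leaf hvIcc
  · by_cases hc2 : v ≤ 2*n-1
    · -- t-vertex, v = n + m with 2 ≤ m ≤ n-1
      set m := v - n with hm
      by_cases hmk : m ≤ (intl T).card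
      · -- in-edge of vOf m
        obtain ⟨hw1, hw2, hw3⟩ := vOf_ne_root (T := T) hn (j := m) (by omega) hmk
        obtain ⟨e, he, he2⟩ := in_edge_of hT hn (Finset.mem_sdiff.1 hw1).1 hw3
        obtain ⟨c, hc⟩ := pathE_last (trip T e).1 (trip T e).2.2 (trip T e).2.1
        refine ⟨(c, (trip T e).2.2), mem_pathsE_of (mem_tripsL.2 ⟨e, he, rfl⟩) hc, ?_⟩
        rw [trip_tgt hT hn, he2, psi_intl hw1, hw2]
        omega
      · -- thread mid
        have hx : v ∈ (trip T (astar T, lstar T)).2.1 := by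
          rw [star_trip_eq hT hn]
          simp only [List.mem_append, List.mem_singleton]
          left
          apply thr_mem_of hT hn (m := m) (by omega) (by omega)
          by_cases h2 : m = 2
          · exact Or.inl ⟨h2, by omega⟩
          · exact Or.inr ⟨by omega, Or.inr (by omega)⟩
        obtain ⟨c, hc⟩ := pathE_mid_tgt hx (trip T (astar T, lstar T)).1
          (trip T (astar T, lstar T)).2.2
        exact ⟨(c, v), mem_pathsE_of (star_mem_tripsL hT hn) hc, rfl⟩
    · by_cases hc3 : v ≤ 3*n-1
      · -- r-vertex, v = 2n + j with 3 ≤ j ≤ n-1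
        set j := v - 2*n with hj
        by_cases hjk : j ≤ (intl T).card
        · obtain ⟨hw1, hw2, hw3⟩ := vOf_ne_root (T := T) hn (j := j) (by omega) hjk
          obtain ⟨e, he, he2⟩ := in_edge_of hT hn (Finset.mem_sdiff.1 hw1).1 hw3
          have hestar : e ≠ (astar T, lstar T) := by
            intro hc
            have : e.2 = lstar T := by rw [hc]
            rw [he2] at this
            have hlIcc := (star_spec hT hn).1
            rw [← this] at hlIcc
            exact (Finset.mem_sdiff.1 hw1).2 hlIcc
          have hx : v ∈ (trip T e).2.1 := by
            rw [nonstar_trip_eq hestar]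
            simp only
            rw [stdmid]
            have hnotleaf : ¬(1 ≤ e.2 ∧ e.2 ≤ n) := by
              intro hc
              exact (Finset.mem_sdiff.1 (he2 ▸ hw1)).2 (Finset.mem_Icc.2 hc)
            rw [if_neg hnotleaf, if_neg (by rw [he2, hw2]; omega)]
            simp only [List.mem_singleton]
            rw [he2, hw2]
            omega
          obtain ⟨c, hc⟩ := pathE_mid_tgt hx (trip T e).1 (trip T e).2.2
          exact ⟨(c, v), mem_pathsE_of (mem_tripsL.2 ⟨e, he, rfl⟩) hc, rfl⟩
        · have hx : v ∈ (trip T (astar T, lstar T)).2.1 := by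
            rw [star_trip_eq hT hn]
            simp only [List.mem_append, List.mem_singleton]
            left
            apply thr_mem_of hT hn (m := j) (by omega) (by omega)
            exact Or.inr ⟨by omega, Or.inl (by omega)⟩
          obtain ⟨c, hc⟩ := pathE_mid_tgt hx (trip T (astar T, lstar T)).1
            (trip T (astar T, lstar T)).2.2
          exact ⟨(c, v), mem_pathsE_of (star_mem_tripsL hT hn) hc, rfl⟩
      · -- s-vertex, v = 3n + ℓ
        set l := v - 3*n with hlv
        have hlIcc : l ∈ Finset.Icc 1 n := Finset.mem_Icc.2 ⟨by omega, by omega⟩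
        obtain ⟨e, he, he2⟩ := in_edge_of hT hn (leaf_mem hlIcc).1
          (fun hc => root_not_leaf T (by omega) (hc ▸ hlIcc))
        by_cases hestar : e = (astar T, lstar T)
        · have hll : l = lstar T := by rw [← he2, hestar]
          have hx : v ∈ (trip T (astar T, lstar T)).2.1 := by
            rw [star_trip_eq hT hn]
            simp only [List.mem_append, List.mem_singleton]
            right
            omega
          obtain ⟨c, hc⟩ := pathE_mid_tgt hx (trip T (astar T, lstar T)).1
            (trip T (astar T, lstar T)).2.2
          exact ⟨(c, v), mem_pathsE_of (star_mem_tripsL hT hn) hc, rfl⟩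
        · have hx : v ∈ (trip T e).2.1 := by
            rw [nonstar_trip_eq hestar]
            simp only
            rw [stdmid, if_pos (by rw [he2]; exact Finset.mem_Icc.1 hlIcc)]
            simp only [List.mem_singleton]
            omega
          obtain ⟨c, hc⟩ := pathE_mid_tgt hx (trip T e).1 (trip T e).2.2
          exact ⟨(c, v), mem_pathsE_of (mem_tripsL.2 ⟨e, he, rfl⟩) hc, rfl⟩

lemma E'_src_cover (hT : T.IsTree) (hn : 3 ≤ n) :
    ∀ v ∈ NetV n, ¬(1 ≤ v ∧ v ≤ n) → ∃ e ∈ pathsE (tripsL T), e.1 = v := by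
  intro v hv hnl
  have hk1 := k_pos (T := T) hn
  have hk2 := k_le hT hn
  have hl := Finset.mem_Icc.1 (star_spec hT hn).1
  rw [mem_NetV] at hv
  by_cases hc2 : v ≤ 2*n-1
  · -- t-vertex, v = n + m with 1 ≤ m ≤ n-1
    set m := v - n with hm
    by_cases hmk : m ≤ (intl T).card
    · obtain ⟨hw1, hw2⟩ := vOfT_spec (T := T) (j := m) (by rw [Finset.mem_Icc]; omega)
      obtain ⟨e, he, he1, hestar⟩ := exists_out_ne_star hT hn hw1
      obtain ⟨c, hc⟩ := pathE_mid_src (a := (trip T e).1) (x := (trip T e).1)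
        (Or.inl rfl) ((trip T e).2.2)
      refine ⟨((trip T e).1, c), mem_pathsE_of (mem_tripsL.2 ⟨e, he, rfl⟩) hc, ?_⟩
      simp only
      rw [trip_fst hn, he1, hw2]
      omega
    · have hx : v ∈ (trip T (astar T, lstar T)).2.1 := by
        rw [star_trip_eq hT hn]
        simp only [List.mem_append, List.mem_singleton]
        left
        apply thr_mem_of hT hn (m := m) (by omega) (by omega)
        by_cases h2 : m = 2
        · exact Or.inl ⟨h2, by omega⟩
        · exact Or.inr ⟨by omega, Or.inr (by omega)⟩
      obtain ⟨c, hc⟩ := pathE_mid_src (Or.inr hx) (trip T (astar T, lstar T)).2.2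
      exact ⟨(v, c), mem_pathsE_of (star_mem_tripsL hT hn) hc, rfl⟩
  · by_cases hc3 : v ≤ 3*n-1
    · set j := v - 2*n with hj
      by_cases hjk : j ≤ (intl T).card
      · obtain ⟨hw1, hw2, hw3⟩ := vOf_ne_root (T := T) hn (j := j) (by omega) hjk
        obtain ⟨e, he, he2⟩ := in_edge_of hT hn (Finset.mem_sdiff.1 hw1).1 hw3
        have hestar : e ≠ (astar T, lstar T) := by
          intro hc
          have : e.2 = lstar T := by rw [hc]
          rw [he2] at this
          have hlIcc := (star_spec hT hn).1
          rw [← this] at hlIcc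
          exact (Finset.mem_sdiff.1 hw1).2 hlIcc
        have hx : v ∈ (trip T e).2.1 := by
          rw [nonstar_trip_eq hestar]
          simp only
          rw [stdmid]
          have hnotleaf : ¬(1 ≤ e.2 ∧ e.2 ≤ n) := by
            intro hc
            exact (Finset.mem_sdiff.1 (he2 ▸ hw1)).2 (Finset.mem_Icc.2 hc)
          rw [if_neg hnotleaf, if_neg (by rw [he2, hw2]; omega)]
          simp only [List.mem_singleton]
          rw [he2, hw2]
          omega
        obtain ⟨c, hc⟩ := pathE_mid_src (Or.inr hx) (trip T e).2.2
        exact ⟨(v, c), mem_pathsE_of (mem_tripsL.2 ⟨e, he, rfl⟩) hc, rfl⟩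
      · have hx : v ∈ (trip T (astar T, lstar T)).2.1 := by
          rw [star_trip_eq hT hn]
          simp only [List.mem_append, List.mem_singleton]
          left
          apply thr_mem_of hT hn (m := j) (by omega) (by omega)
          exact Or.inr ⟨by omega, Or.inl (by omega)⟩
        obtain ⟨c, hc⟩ := pathE_mid_src (Or.inr hx) (trip T (astar T, lstar T)).2.2
        exact ⟨(v, c), mem_pathsE_of (star_mem_tripsL hT hn) hc, rfl⟩
    · -- s-vertex
      set l := v - 3*n with hlv
      have hlIcc : l ∈ Finset.Icc 1 n := Finset.mem_Icc.2 ⟨by omega, by omega⟩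
      obtain ⟨e, he, he2⟩ := in_edge_of hT hn (leaf_mem hlIcc).1
        (fun hc => root_not_leaf T (by omega) (hc ▸ hlIcc))
      by_cases hestar : e = (astar T, lstar T)
      · have hll : l = lstar T := by rw [← he2, hestar]
        have hx : v ∈ (trip T (astar T, lstar T)).2.1 := by
          rw [star_trip_eq hT hn]
          simp only [List.mem_append, List.mem_singleton]
          right
          omega
        obtain ⟨c, hc⟩ := pathE_mid_src (Or.inr hx) (trip T (astar T, lstar T)).2.2
        exact ⟨(v, c), mem_pathsE_of (star_mem_tripsL hT hn) hc, rfl⟩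
      · have hx : v ∈ (trip T e).2.1 := by
          rw [nonstar_trip_eq hestar]
          simp only
          rw [stdmid, if_pos (by rw [he2]; exact Finset.mem_Icc.1 hlIcc)]
          simp only [List.mem_singleton]
          omega
        obtain ⟨c, hc⟩ := pathE_mid_src (Or.inr hx) (trip T e).2.2
        exact ⟨(v, c), mem_pathsE_of (mem_tripsL.2 ⟨e, he, rfl⟩) hc, rfl⟩

end Cover2
section Assemble

variable {n : ℕ} {T : RPN n}

lemma E'_tgt_ne_root (hT : T.IsTree) (hn : 3 ≤ n) :
    ∀ e ∈ pathsE (tripsL T), e.2 ≠ n + 1 := by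
  intro e he
  obtain ⟨t, ht, het⟩ := mem_pathsE he
  obtain ⟨u, hu, rfl⟩ := mem_tripsL.1 ht
  have hk1 := k_pos (T := T) hn
  have hk2 := k_le hT hn
  have hl := Finset.mem_Icc.1 (star_spec hT hn).1
  rcases pathE_snd het with h | h
  · rcases mem_trip_mid hT hn hu h with ⟨_, h1, h2⟩ | ⟨_, h1, h2, h3, h4⟩ | ⟨_, hth⟩
    · have hb := Finset.mem_Icc.1 h1
      omega
    · omega
    · rcases hth with h' | ⟨m, hm1, hm2, hm3⟩
      · omega
      · rcases hm3 with ⟨hm4, hm5⟩ | ⟨hm4, hm5 | hm5⟩ <;> omega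
  · rw [trip_tgt hT hn] at h
    rcases tgt_cases hu with h' | h'
    · rw [psi_leaf h'] at h
      have := Finset.mem_Icc.1 h'
      omega
    · rw [psi_intl h'] at h
      have := sig_tgt hn hu h'
      omega

lemma E'_card (hT : T.IsTree) (hn : 3 ≤ n) :
    (pathsE (tripsL T)).card + 1 = (NetV n).card := by
  have himg : (pathsE (tripsL T)).image Prod.snd = (NetV n).erase (n+1) := by
    ext v
    rw [Finset.mem_image, Finset.mem_erase]
    constructor
    · rintro ⟨e, he, rfl⟩
      exact ⟨E'_tgt_ne_root hT hn e he,
        NetE_tgt_mem hn (a := e.1) (b := e.2) (by simpa using E'_sub hT hn e he)⟩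
    · rintro ⟨hne, hv⟩
      obtain ⟨e, he, he2⟩ := E'_tgt_cover hT hn v hv hne
      exact ⟨e, he, he2⟩
  have hinj : ((pathsE (tripsL T)).image Prod.snd).card = (pathsE (tripsL T)).card :=
    Finset.card_image_of_injOn (fun e he f hf h => E'_tgt_inj hT hn e he f hf h)
  have hroot : (n+1) ∈ NetV n := by rw [mem_NetV]; omega
  have := Finset.card_erase_of_mem hroot
  have hpos : 0 < (NetV n).card := Finset.card_pos.2 ⟨n+1, hroot⟩
  rw [himg] at hinj
  omega

lemma E'_support (hT : T.IsTree) (hn : 3 ≤ n) :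
    IsSupportTree n (NetN n hn) (pathsE (tripsL T)) := by
  refine ⟨fun e he => E'_sub hT hn e he, E'_card hT hn, ?_, ?_⟩
  · -- reachability
    apply reach_of_grade (gr := grN n)
    · intro e he
      exact grN_edge hn e (E'_sub hT hn e he)
    · intro v hv hne
      obtain ⟨e, he, he2⟩ := E'_tgt_cover hT hn v hv hne
      refine ⟨e.1, NetE_src_mem hn (a := e.1) (b := e.2)
        (by simpa using E'_sub hT hn e he), ?_⟩
      rw [← he2] at *
      exact he
  · -- leaves
    ext v
    rw [Finset.mem_filter]
    constructor
    · rintro ⟨hv, hout⟩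
      by_contra hc
      have hc' : ¬(1 ≤ v ∧ v ≤ n) := by
        rw [Finset.mem_Icc] at hc
        exact hc
      obtain ⟨e, he, he1⟩ := E'_src_cover hT hn v hv hc'
      have : 0 < outdeg (pathsE (tripsL T)) v := by
        apply outdeg_pos (v := e.2)
        rw [← he1] at *
        exact he
      omega
    · intro hv
      have h1 := Finset.mem_Icc.1 hv
      refine ⟨by show v ∈ NetV n; rw [mem_NetV]; omega, ?_⟩
      have : outdeg (NetE n) v = 0 := outdeg_leaf h1.2
      have hmono := outdeg_mono (fun e he => E'_sub hT hn e he) v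
      omega

lemma mids_not_kept (hT : T.IsTree) (hn : 3 ≤ n) {x : ℕ}
    (hx : x ∈ midsL (tripsL T)) :
    ¬(x ≤ n) ∧ ¬(n+1 ≤ x ∧ x ≤ n + (intl T).card) := by
  obtain ⟨t, ht, hxt⟩ := mem_midsL.1 hx
  obtain ⟨e, he, rfl⟩ := mem_tripsL.1 ht
  have hk1 := k_pos (T := T) hn
  have hk2 := k_le hT hn
  have hl := Finset.mem_Icc.1 (star_spec hT hn).1
  rcases mem_trip_mid hT hn he hxt with ⟨_, h1, h2⟩ | ⟨_, h1, h2, h3, h4⟩ | ⟨_, hth⟩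
  · have hb := Finset.mem_Icc.1 h1
    omega
  · omega
  · rcases hth with h | ⟨m, hm1, hm2, hm3⟩
    · omega
    · rcases hm3 with ⟨hm4, hm5⟩ | ⟨hm4, hm5 | hm5⟩ <;> omega

lemma mid_cover (hT : T.IsTree) (hn : 3 ≤ n) :
    ∀ v ∈ NetV n, ¬(1 ≤ v ∧ v ≤ n) → ¬(n+1 ≤ v ∧ v ≤ n + (intl T).card) →
    v ∈ midsL (tripsL T) := by
  intro v hv h1 h2
  have hk1 := k_pos (T := T) hn
  have hk2 := k_le hT hn
  have hl := Finset.mem_Icc.1 (star_spec hT hn).1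
  rw [mem_NetV] at hv
  by_cases hc2 : v ≤ 2*n-1
  · -- t-vertex with m > k
    set m := v - n with hm
    refine mem_midsL.2 ⟨_, star_mem_tripsL hT hn, ?_⟩
    rw [star_trip_eq hT hn]
    simp only [List.mem_append, List.mem_singleton]
    left
    apply thr_mem_of hT hn (m := m) (by omega) (by omega)
    by_cases hm2 : m = 2
    · exact Or.inl ⟨hm2, by omega⟩
    · exact Or.inr ⟨by omega, Or.inr (by omega)⟩
  · by_cases hc3 : v ≤ 3*n-1
    · set j := v - 2*n with hj
      by_cases hjk : j ≤ (intl T).card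
      · obtain ⟨hw1, hw2, hw3⟩ := vOf_ne_root (T := T) hn (j := j) (by omega) hjk
        obtain ⟨e, he, he2⟩ := in_edge_of hT hn (Finset.mem_sdiff.1 hw1).1 hw3
        have hestar : e ≠ (astar T, lstar T) := by
          intro hc
          have : e.2 = lstar T := by rw [hc]
          rw [he2] at this
          have hlIcc := (star_spec hT hn).1
          rw [← this] at hlIcc
          exact (Finset.mem_sdiff.1 hw1).2 hlIcc
        refine mem_midsL.2 ⟨_, mem_tripsL.2 ⟨e, he, rfl⟩, ?_⟩
        rw [nonstar_trip_eq hestar]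
        simp only
        rw [stdmid]
        have hnotleaf : ¬(1 ≤ e.2 ∧ e.2 ≤ n) := by
          intro hc
          exact (Finset.mem_sdiff.1 (he2 ▸ hw1)).2 (Finset.mem_Icc.2 hc)
        rw [if_neg hnotleaf, if_neg (by rw [he2, hw2]; omega)]
        simp only [List.mem_singleton]
        rw [he2, hw2]
        omega
      · refine mem_midsL.2 ⟨_, star_mem_tripsL hT hn, ?_⟩
        rw [star_trip_eq hT hn]
        simp only [List.mem_append, List.mem_singleton]
        left
        apply thr_mem_of hT hn (m := j) (by omega) (by omega)
        exact Or.inr ⟨by omega, Or.inl (by omega)⟩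
    · set l := v - 3*n with hlv
      have hlIcc : l ∈ Finset.Icc 1 n := Finset.mem_Icc.2 ⟨by omega, by omega⟩
      obtain ⟨e, he, he2⟩ := in_edge_of hT hn (leaf_mem hlIcc).1
        (fun hc => root_not_leaf T (by omega) (hc ▸ hlIcc))
      by_cases hestar : e = (astar T, lstar T)
      · have hll : l = lstar T := by rw [← he2, hestar]
        refine mem_midsL.2 ⟨_, star_mem_tripsL hT hn, ?_⟩
        rw [star_trip_eq hT hn]
        simp only [List.mem_append, List.mem_singleton]
        right
        omega
      · refine mem_midsL.2 ⟨_, mem_tripsL.2 ⟨e, he, rfl⟩, ?_⟩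
        rw [nonstar_trip_eq hestar]
        simp only
        rw [stdmid, if_pos (by rw [he2]; exact Finset.mem_Icc.1 hlIcc)]
        simp only [List.mem_singleton]
        omega

lemma final_V (hT : T.IsTree) (hn : 3 ≤ n) :
    NetV n \ (midsL (tripsL T)).toFinset =
      Finset.Icc 1 n ∪ Finset.Icc (n+1) (n + (intl T).card) := by
  have hk1 := k_pos (T := T) hn
  have hk2 := k_le hT hn
  ext v
  rw [Finset.mem_sdiff, Finset.mem_union, Finset.mem_Icc, Finset.mem_Icc,
    List.mem_toFinset]
  constructor
  · rintro ⟨hv, hnm⟩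
    by_contra hc
    push_neg at hc
    apply hnm
    apply mid_cover hT hn v hv
    · intro h; have := hc.1 h.1; omega
    · intro h; have := hc.2 h.1; omega
  · intro h
    constructor
    · rw [mem_NetV]; omega
    · intro hm
      have := mids_not_kept hT hn hm
      omega

lemma final_E (hT : T.IsTree) (hn : 3 ≤ n) :
    finE (tripsL T) = T.E.image (fun e => (n + sigT T e.1, psi T e.2)) := by
  ext e
  rw [mem_finE, Finset.mem_image]
  constructor
  · rintro ⟨t, ht, rfl⟩
    obtain ⟨u, hu, rfl⟩ := mem_tripsL.1 ht
    exact ⟨u, hu, by rw [trip_fst hn, trip_tgt hT hn]⟩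
  · rintro ⟨u, hu, rfl⟩
    exact ⟨trip T u, mem_tripsL.2 ⟨u, hu, rfl⟩, by rw [trip_fst hn, trip_tgt hT hn]⟩

lemma suppression (hT : T.IsTree) (hn : 3 ≤ n) :
    Relation.ReflTransGen SuppressStep (NetV n, pathsE (tripsL T))
      (Finset.Icc 1 n ∪ Finset.Icc (n+1) (n + (intl T).card),
        T.E.image (fun e => (n + sigT T e.1, psi T e.2))) := by
  have h := multi_contract (tripsL T) (NetV n) ∅
    (nodup_midsL_of (trip T) T.E.toList T.E.nodup_toList
      (fun e _ => trip_mid_nodup hT hn)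
      (fun e he e' he' hne => mid_disjoint hT hn e (Finset.mem_toList.1 he)
        e' (Finset.mem_toList.1 he') hne))
    (mids_NetV hT hn)
    (fun x hx => ⟨by simp, mids_fresh hT hn x hx⟩)
    (trip_ne hT hn)
  rw [Finset.empty_union, Finset.empty_union, final_V hT hn, final_E hT hn] at h
  exact h

end Assemble
section Iso

variable {n : ℕ} {T : RPN n}

lemma final_NoDeg2 (hT : T.IsTree) (hn : 3 ≤ n) :
    NoDeg2 (Finset.Icc 1 n ∪ Finset.Icc (n+1) (n + (intl T).card),
      T.E.image (fun e => (n + sigT T e.1, psi T e.2))) := by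
  intro v hv
  simp only [Finset.mem_union, Finset.mem_Icc] at hv
  rintro ⟨hin, hout⟩
  dsimp only at hin hout
  rcases hv with hv | hv
  · -- leaf : outdegree 0
    have : outdeg (T.E.image (fun e => (n + sigT T e.1, psi T e.2))) v = 0 := by
      apply outdeg_eq_zero
      rintro ⟨a, b⟩ he
      obtain ⟨u, hu, heq⟩ := Finset.mem_image.1 he
      have hsrc := sig_bounds (edge_src_intl (a := u.1) (b := u.2) (by simpa using hu))
      cases heq
      simp only
      omega
    omega
  · -- internal : outdegree at least 2
    set j := v - n with hj
    obtain ⟨hw1, hw2⟩ := vOfT_spec (T := T) (j := j) (by rw [Finset.mem_Icc]; omega)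
    have h2 : 2 ≤ outdeg T.E (vOfT T j) := intl_out T hT (by omega) _ hw1
    have h2' : 1 < (T.E.filter (fun e => e.1 = vOfT T j)).card := by
      have h3 : outdeg T.E (vOfT T j) = (T.E.filter (fun e => e.1 = vOfT T j)).card := rfl
      omega
    obtain ⟨e1, he1, e2, he2, hne⟩ := Finset.one_lt_card.1 h2'
    obtain ⟨he1E, he1s⟩ := Finset.mem_filter.1 he1
    obtain ⟨he2E, he2s⟩ := Finset.mem_filter.1 he2
    have hnj : n + j = v := by omega
    have himg1 : (v, psi T e1.2) ∈ T.E.image (fun e => (n + sigT T e.1, psi T e.2)) :=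
      Finset.mem_image.2 ⟨e1, he1E, by rw [he1s, hw2, hnj]⟩
    have himg2 : (v, psi T e2.2) ∈ T.E.image (fun e => (n + sigT T e.1, psi T e.2)) :=
      Finset.mem_image.2 ⟨e2, he2E, by rw [he2s, hw2, hnj]⟩
    have hne2 : psi T e1.2 ≠ psi T e2.2 := by
      intro hc
      apply hne
      have he12 : e1.2 = e2.2 := psi_inj (T.edge_mem _ he1E).2 (T.edge_mem _ he2E).2 hc
      have : e1 = (e1.1, e1.2) := rfl
      rw [Prod.ext_iff]
      exact ⟨he1s.trans he2s.symm, he12⟩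
    have := two_le_outdeg himg1 himg2 hne2
    omega

lemma final_LeafIso (hT : T.IsTree) (hn : 3 ≤ n) :
    LeafIso n (Finset.Icc 1 n ∪ Finset.Icc (n+1) (n + (intl T).card),
      T.E.image (fun e => (n + sigT T e.1, psi T e.2))) (T.V, T.E) := by
  have hk1 := k_pos (T := T) hn
  have hk2 := k_le hT hn
  refine ⟨fun x => if x ≤ n then x else vOfT T (x - n), ?_, ?_, ?_, ?_⟩
  · -- injective
    intro u hu v hv huv
    simp only [Finset.coe_union, Set.mem_union, Finset.mem_coe, Finset.mem_Icc] at hu hv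
    dsimp only at huv
    by_cases h1 : u ≤ n <;> by_cases h2 : v ≤ n
    · rwa [if_pos h1, if_pos h2] at huv
    · exfalso
      rw [if_pos h1, if_neg h2] at huv
      have hvb : n + 1 ≤ v ∧ v ≤ n + (intl T).card := by rcases hv with h | h <;> omega
      have hv' : v - n ∈ Finset.Icc 1 (intl T).card := by rw [Finset.mem_Icc]; omega
      obtain ⟨hw1, _⟩ := vOfT_spec hv'
      have hu1 : 1 ≤ u := by rcases hu with h | h <;> omega
      exact (Finset.mem_sdiff.1 hw1).2 (huv ▸ Finset.mem_Icc.2 ⟨hu1, h1⟩)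
    · exfalso
      rw [if_neg h1, if_pos h2] at huv
      have hub : n + 1 ≤ u ∧ u ≤ n + (intl T).card := by rcases hu with h | h <;> omega
      have hu' : u - n ∈ Finset.Icc 1 (intl T).card := by rw [Finset.mem_Icc]; omega
      obtain ⟨hw1, _⟩ := vOfT_spec hu'
      have hv1 : 1 ≤ v := by rcases hv with h | h <;> omega
      exact (Finset.mem_sdiff.1 hw1).2 (huv ▸ Finset.mem_Icc.2 ⟨hv1, h2⟩)
    · rw [if_neg h1, if_neg h2] at huv
      have hub : n + 1 ≤ u ∧ u ≤ n + (intl T).card := by rcases hu with h | h <;> omega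
      have hvb : n + 1 ≤ v ∧ v ≤ n + (intl T).card := by rcases hv with h | h <;> omega
      have hu' : u - n ∈ Finset.Icc 1 (intl T).card := by rw [Finset.mem_Icc]; omega
      have hv' : v - n ∈ Finset.Icc 1 (intl T).card := by rw [Finset.mem_Icc]; omega
      obtain ⟨hwu1, hwu2⟩ := vOfT_spec hu'
      obtain ⟨hwv1, hwv2⟩ := vOfT_spec hv'
      have : u - n = v - n := by rw [← hwu2, ← hwv2, huv]
      omega
  · -- image of vertices
    ext v
    rw [Finset.mem_image]
    constructor
    · rintro ⟨u, hu, rfl⟩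
      rw [Finset.mem_union, Finset.mem_Icc, Finset.mem_Icc] at hu
      rcases hu with hu | hu
      · rw [if_pos hu.2]
        exact (leaf_mem (Finset.mem_Icc.2 hu)).1
      · rw [if_neg (by omega)]
        have hu' : u - n ∈ Finset.Icc 1 (intl T).card := by rw [Finset.mem_Icc]; omega
        exact (Finset.mem_sdiff.1 (vOfT_spec hu').1).1
    · intro hv
      have := V_eq_union T ▸ hv
      rw [Finset.mem_union] at this
      rcases this with h | h
      · refine ⟨v, ?_, if_pos (Finset.mem_Icc.1 h).2⟩
        rw [Finset.mem_union]
        exact Or.inl h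
      · refine ⟨n + sigT T v, ?_, ?_⟩
        · rw [Finset.mem_union, Finset.mem_Icc, Finset.mem_Icc]
          have := sig_bounds h
          omega
        · have hsb := sig_bounds h
          rw [if_neg (by omega)]
          have : n + sigT T v - n = sigT T v := by omega
          rw [this, vOfT_sig h]
  · -- image of edges
    ext e
    rw [Finset.mem_image]
    constructor
    · rintro ⟨f, hf, rfl⟩
      obtain ⟨u, hu, rfl⟩ := Finset.mem_image.1 hf
      simp only
      have hsrc : u.1 ∈ intl T := edge_src_intl (a := u.1) (b := u.2) (by simpa using hu)
      have hs := sig_bounds hsrc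
      have h1 : (if n + sigT T u.1 ≤ n then n + sigT T u.1
          else vOfT T (n + sigT T u.1 - n)) = u.1 := by
        rw [if_neg (by omega)]
        have : n + sigT T u.1 - n = sigT T u.1 := by omega
        rw [this, vOfT_sig hsrc]
      have h2 : (if psi T u.2 ≤ n then psi T u.2 else vOfT T (psi T u.2 - n)) = u.2 := by
        rcases tgt_cases hu with h | h
        · rw [psi_leaf h, if_pos (Finset.mem_Icc.1 h).2]
        · have hsb := sig_bounds h
          rw [psi_intl h, if_neg (by omega)]
          have : n + sigT T u.2 - n = sigT T u.2 := by omega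
          rw [this, vOfT_sig h]
      rw [h1, h2]
      exact hu
    · intro he
      refine ⟨(n + sigT T e.1, psi T e.2), Finset.mem_image.2 ⟨e, he, rfl⟩, ?_⟩
      simp only
      have hsrc : e.1 ∈ intl T := edge_src_intl (a := e.1) (b := e.2) (by simpa using he)
      have hs := sig_bounds hsrc
      rw [if_neg (by omega)]
      have h1 : n + sigT T e.1 - n = sigT T e.1 := by omega
      rw [h1, vOfT_sig hsrc]
      rcases tgt_cases he with h | h
      · rw [psi_leaf h, if_pos (Finset.mem_Icc.1 h).2]
      · have hsb := sig_bounds h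
        rw [psi_intl h, if_neg (by omega)]
        have h2 : n + sigT T e.2 - n = sigT T e.2 := by omega
        rw [h2, vOfT_sig h]
  · -- leaves fixed
    intro x hx _
    dsimp only
    rw [if_pos (Finset.mem_Icc.1 hx).2]

theorem universal_NetN (n : ℕ) (hn : 3 ≤ n) : UniversalRPN n (NetN n hn) := by
  intro T hT
  refine ⟨hT, pathsE (tripsL T), E'_support hT hn, _, suppression hT hn,
    final_NoDeg2 hT hn, final_LeafIso hT hn⟩

end Iso
section Star

/-- The star tree on `n` leaves, with root `0`. -/
def StarT (n : ℕ) (hn : 2 ≤ n) : RPN n where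
  V := insert 0 (Finset.Icc 1 n)
  E := (Finset.Icc 1 n).image (fun l => ((0 : ℕ), l))
  edge_mem := by
    intro e he
    obtain ⟨l, hl, rfl⟩ := Finset.mem_image.1 he
    exact ⟨Finset.mem_insert_self _ _, Finset.mem_insert_of_mem hl⟩
  no_loop := by
    intro e he
    obtain ⟨l, hl, rfl⟩ := Finset.mem_image.1 he
    have := Finset.mem_Icc.1 hl
    simp only [ne_eq]
    omega
  root := 0
  root_mem := Finset.mem_insert_self _ _
  reach_root := by
    intro v hv
    rcases Finset.mem_insert.1 hv with rfl | hv
    · exact Relation.ReflTransGen.refl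
    · exact Relation.ReflTransGen.single (Finset.mem_image.2 ⟨v, hv, rfl⟩)
  acyclic := by
    apply acyc_of_grade (gr := id)
    intro e he
    obtain ⟨l, hl, rfl⟩ := Finset.mem_image.1 he
    have := Finset.mem_Icc.1 hl
    simp only [id]
    omega
  leaves_eq := by
    ext x
    rw [Finset.mem_filter, Finset.mem_insert]
    constructor
    · rintro ⟨rfl | hx, hout⟩
      · exfalso
        have : (0, 1) ∈ (Finset.Icc 1 n).image (fun l => ((0 : ℕ), l)) :=
          Finset.mem_image.2 ⟨1, Finset.mem_Icc.2 ⟨le_refl _, by omega⟩, rfl⟩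
        have := outdeg_pos this
        omega
      · exact hx
    · intro hx
      refine ⟨Or.inr hx, outdeg_eq_zero ?_⟩
      rintro ⟨a, b⟩ he rfl
      obtain ⟨l, hl, heq⟩ := Finset.mem_image.1 he
      have := Finset.mem_Icc.1 hx
      have : a = 0 := (Prod.ext_iff.1 heq.symm).1
      omega
  degree_cond := by
    right
    have h01 : ((0 : ℕ), (1 : ℕ)) ∈ (Finset.Icc 1 n).image (fun l => ((0 : ℕ), l)) :=
      Finset.mem_image.2 ⟨1, Finset.mem_Icc.2 ⟨le_refl _, by omega⟩, rfl⟩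
    have h02 : ((0 : ℕ), (2 : ℕ)) ∈ (Finset.Icc 1 n).image (fun l => ((0 : ℕ), l)) :=
      Finset.mem_image.2 ⟨2, Finset.mem_Icc.2 ⟨by omega, by omega⟩, rfl⟩
    refine ⟨?_, two_le_outdeg h01 h02 (by omega), ?_⟩
    · apply indeg_eq_zero
      rintro ⟨a, b⟩ he rfl
      obtain ⟨l, hl, heq⟩ := Finset.mem_image.1 he
      have h1 := Finset.mem_Icc.1 hl
      have : l = 0 := (Prod.ext_iff.1 heq).2
      omega
    · intro v hv hne
      left
      rcases Finset.mem_insert.1 hv with rfl | hv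
      · exact absurd rfl hne
      · have h1 := Finset.mem_Icc.1 hv
        constructor
        · apply outdeg_eq_zero
          rintro ⟨a, b⟩ he rfl
          obtain ⟨l, hl, heq⟩ := Finset.mem_image.1 he
          have : a = 0 := (Prod.ext_iff.1 heq.symm).1
          omega
        · apply indeg_eq_one (u := 0)
          · exact Finset.mem_image.2 ⟨v, hv, rfl⟩
          · rintro ⟨a, b⟩ he rfl
            obtain ⟨l, hl, heq⟩ := Finset.mem_image.1 he
            rw [← heq]

lemma StarT_IsTree (n : ℕ) (hn : 2 ≤ n) : (StarT n hn).IsTree := by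
  unfold RPN.IsTree StarT
  simp only
  rw [Finset.card_image_of_injective _ (fun a b h => (Prod.ext_iff.1 h).2),
    Finset.card_insert_of_notMem (by rw [Finset.mem_Icc]; omega), Nat.card_Icc]

lemma treeBased_NetN (n : ℕ) (hn : 3 ≤ n) : TreeBased n (NetN n hn) := by
  obtain ⟨-, E', hs, -⟩ := universal_NetN n hn (StarT n (by omega)) (StarT_IsTree n (by omega))
  exact ⟨E', hs⟩

end Star

section TwoCase

/-- The (unique up to isomorphism) network used for `n = 2`. -/
def N₂ : RPN 2 where
  V := {1, 2, 3}
  E := {(3, 1), (3, 2)}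
  edge_mem := by decide
  no_loop := by decide
  root := 3
  root_mem := by decide
  reach_root := by
    intro v hv
    fin_cases hv
    · exact Relation.ReflTransGen.single (by decide)
    · exact Relation.ReflTransGen.single (by decide)
    · exact Relation.ReflTransGen.refl
  acyclic := acyc_of_grade (gr := fun x => if x = 3 then 0 else 1) (by decide)
  leaves_eq := by decide
  degree_cond := by right; refine ⟨by decide, by decide, by decide⟩

lemma universal_N₂ : UniversalRPN 2 N₂ := by
  intro T hT
  have hn : (2 : ℕ) ≤ 2 := le_refl _
  have hk : (intl T).card = 1 := by
    have h1 := intl_card_le T hT hn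
    have h2 : 0 < (intl T).card := Finset.card_pos.2 ⟨T.root, root_mem_intl T hn⟩
    omega
  have hintl : intl T = {T.root} := by
    symm
    apply Finset.eq_of_subset_of_card_le
    · exact Finset.singleton_subset_iff.2 (root_mem_intl T hn)
    · rw [hk, Finset.card_singleton]
  have hE : T.E = {(T.root, 1), (T.root, 2)} := by
    ext e
    constructor
    · intro he
      have hsrc : e.1 = T.root := by
        have := edge_src_intl (a := e.1) (b := e.2) (by simpa using he)
        rw [hintl] at this
        exact Finset.mem_singleton.1 this
      have htgt : e.2 ∈ Finset.Icc 1 2 := by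
        rcases tgt_cases he with h | h
        · exact h
        · exfalso
          rw [hintl] at h
          exact tgt_ne_root hn (a := e.1) (b := e.2) (by simpa using he)
            (Finset.mem_singleton.1 h)
      have h12 := Finset.mem_Icc.1 htgt
      rw [Finset.mem_insert, Finset.mem_singleton]
      have heq : e = (e.1, e.2) := rfl
      have h12' : e.2 = 1 ∨ e.2 = 2 := by omega
      rcases h12' with h | h
      · left; rw [heq, hsrc, h]
      · right; rw [heq, hsrc, h]
    · intro he
      rw [Finset.mem_insert, Finset.mem_singleton] at he
      have hleaf : ∀ l, l ∈ Finset.Icc 1 2 → (T.root, l) ∈ T.E := by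
        intro l hl
        obtain ⟨u, hu⟩ := exists_in_edge (T := T) (leaf_mem hl).1
          (fun hc => root_not_leaf T hn (hc ▸ hl))
        have hsrc : u = T.root := by
          have := edge_src_intl hu
          rw [hintl] at this
          exact Finset.mem_singleton.1 this
        rw [← hsrc]
        exact hu
      rcases he with rfl | rfl
      · exact hleaf 1 (by decide)
      · exact hleaf 2 (by decide)
  have hroot1 : T.root ≠ 1 := fun hc => root_not_leaf T hn (by rw [hc]; decide)
  have hroot2 : T.root ≠ 2 := fun hc => root_not_leaf T hn (by rw [hc]; decide)
  have hV : T.V = {1, 2, T.root} := by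
    rw [V_eq_union T, hintl]
    ext v
    simp only [Finset.mem_union, Finset.mem_Icc, Finset.mem_insert, Finset.mem_singleton]
    omega
  refine ⟨hT, N₂.E, ⟨Finset.Subset.refl _, by decide, N₂.reach_root, N₂.leaves_eq⟩,
    (N₂.V, N₂.E), Relation.ReflTransGen.refl, by unfold NoDeg2; decide, ?_⟩
  refine ⟨fun x => if x = 3 then T.root else x, ?_, ?_, ?_, ?_⟩
  · intro a ha b hb hab
    simp only [N₂] at ha hb
    simp only [Finset.coe_insert, Set.mem_insert_iff, Finset.coe_singleton,
      Set.mem_singleton_iff] at ha hb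
    dsimp only at hab
    rcases ha with rfl | rfl | rfl <;> rcases hb with rfl | rfl | rfl <;>
      simp_all <;> omega
  · show Finset.image (fun x => if x = 3 then T.root else x) {1, 2, 3} = T.V
    rw [hV]
    simp
  · show Finset.image (fun e => ((fun x => if x = 3 then T.root else x) e.1,
      (fun x => if x = 3 then T.root else x) e.2)) {(3, 1), (3, 2)} = T.E
    rw [hE]
    simp
  · intro x hx _
    have := Finset.mem_Icc.1 hx
    dsimp only
    rw [if_neg (by omega)]

end TwoCase
/-- For every integer `n ≥ 2` there exists a rooted non-binary universal
tree-based network with `n` leaves having at most `(n-2)^2 + n` reticulation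
vertices (in particular, one with `O(n^2)` reticulations). -/
theorem exists_universal_tree_based_network_quadratic_reticulations :
    ∀ n : ℕ, 2 ≤ n → ∃ N : RPN n, TreeBased n N ∧ UniversalRPN n N ∧
      numReticulations n N ≤ (n - 2) ^ 2 + n := by
  intro n hn
  by_cases h3 : 3 ≤ n
  · exact ⟨NetN n h3, treeBased_NetN n h3, universal_NetN n h3,
      numReticulations_NetN n h3⟩
  · have h2 : n = 2 := by omega
    subst h2
    refine ⟨N₂, ⟨N₂.E, Finset.Subset.refl _, by decide, N₂.reach_root, N₂.leaves_eq⟩,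
      universal_N₂, ?_⟩
    unfold numReticulations
    decide
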